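/- arXiv:1709.09129 — 7 statements merged into one kernel-verified Lean document; each statement's English description precedes it below -/
import Mathlib

section
/- Let X be a connected, locally compact, locally connected, Hausdorff topological space and let C ⊆ X be a compact subset. Then the union of C together with all bounded connected components of X ∖ C is a compact subset of X. -/
/-- A subset of a topological space is *bounded* if it is contained in some compact set. -/
def BoundedSubset {X : Type*} [TopologicalSpace X] (S : Set X) : Prop :=
  ∃ K : Set X, IsCompact K ∧ S ⊆ K

/-- `U` is a connected component of the subspace `F` (of the ambient space `X`). -/
def IsComponentOf {X : Type*} [TopologicalSpace X] (F U : Set X) : Prop :=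
  ∃ x ∈ F, U = connectedComponentIn F x

/-- Let `X` be a connected, locally compact, locally connected, Hausdorff topological space
and `C ⊆ X` compact.  Then the union of `C` together with all bounded connected components
of `X ∖ C` is compact. -/
theorem stmt0 {X : Type*} [TopologicalSpace X] [ConnectedSpace X]
    [LocallyCompactSpace X] [LocallyConnectedSpace X] [T2Space X]
    (C : Set X) (hC : IsCompact C) :
    IsCompact (C ∪ ⋃₀ {U : Set X | IsComponentOf Cᶜ U ∧ BoundedSubset U}) := by
  classical
  set T := C ∪ ⋃₀ {U : Set X | IsComponentOf Cᶜ U ∧ BoundedSubset U} with hTdef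
  have hCc : IsOpen Cᶜ := hC.isClosed.isOpen_compl
  have comp_open : ∀ x : X, IsOpen (connectedComponentIn Cᶜ x) := fun _ =>
    hCc.connectedComponentIn
  -- T is closed
  have hTclosed : IsClosed T := by
    rw [← isOpen_compl_iff, isOpen_iff_forall_mem_open]
    intro x hx
    have hxC : x ∈ Cᶜ := fun h => hx (Or.inl h)
    refine ⟨connectedComponentIn Cᶜ x, ?_, comp_open x, mem_connectedComponentIn hxC⟩
    intro z hz hzT
    rcases hzT with h | h
    · exact (connectedComponentIn_subset Cᶜ x hz) h
    · obtain ⟨U, ⟨⟨x₀, hx₀, rfl⟩, hUb⟩, hzU⟩ := h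
      have heq : connectedComponentIn Cᶜ x = connectedComponentIn Cᶜ x₀ := by
        rw [connectedComponentIn_eq hz, connectedComponentIn_eq hzU]
      exact hx (Or.inr ⟨connectedComponentIn Cᶜ x₀, ⟨⟨x₀, hx₀, rfl⟩, hUb⟩,
        heq ▸ mem_connectedComponentIn hxC⟩)
  by_cases hXc : IsCompact (Set.univ : Set X)
  · exact hXc.of_isClosed_subset hTclosed (Set.subset_univ _)
  obtain ⟨K, hK, hCK⟩ := exists_compact_superset hC
  -- the frontier piece of K
  set Fr := K \ interior K with hFrdef
  have hFr : IsCompact Fr := hK.diff isOpen_interior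
  have hFrCc : Fr ⊆ Cᶜ := fun y hy hyC => hy.2 (hCK hyC)
  obtain ⟨t, htFr, hcover⟩ := hFr.elim_nhds_subcover (fun y => connectedComponentIn Cᶜ y)
    (fun y hy => (comp_open y).mem_nhds (mem_connectedComponentIn (hFrCc hy)))
  -- compact pieces
  set L : X → Set X := fun y =>
    if BoundedSubset (connectedComponentIn Cᶜ y) then closure (connectedComponentIn Cᶜ y)
    else ∅ with hLdef
  have hLc : ∀ y, IsCompact (L y) := by
    intro y
    simp only [hLdef]
    split_ifs with h
    · obtain ⟨K', hK', hsub⟩ := h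
      exact hK'.of_isClosed_subset isClosed_closure (closure_minimal hsub hK'.isClosed)
    · exact isCompact_empty
  have hM : IsCompact (K ∪ ⋃ y ∈ t, L y) :=
    hK.union (t.finite_toSet.isCompact_biUnion fun y _ => hLc y)
  refine hM.of_isClosed_subset hTclosed ?_
  rintro x (hx | hx)
  · exact Or.inl (interior_subset (hCK hx))
  obtain ⟨U, ⟨⟨x₀, hx₀, rfl⟩, hUb⟩, hxU⟩ := hx
  set U := connectedComponentIn Cᶜ x₀ with hUdef
  -- the frontier of U lies in C
  have hbd : ∀ y ∈ closure U, y ∉ U → y ∈ C := by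
    intro y hy hyU
    by_contra hyC
    have hyCc : y ∈ Cᶜ := hyC
    have hopen : IsOpen (connectedComponentIn Cᶜ y) := comp_open y
    obtain ⟨z, hzV, hzU⟩ :=
      mem_closure_iff.mp hy _ hopen (mem_connectedComponentIn hyCc)
    have : U = connectedComponentIn Cᶜ y := by
      rw [hUdef, connectedComponentIn_eq hzU]  -- wrong direction maybe
      exact (connectedComponentIn_eq hzV).symm
    exact hyU (this ▸ mem_connectedComponentIn hyCc)
  -- U is not everything
  have hUne : U ≠ Set.univ := by
    intro h
    obtain ⟨K', hK', hsub⟩ := hUb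
    exact hXc (hK'.of_isClosed_subset isClosed_univ (h ▸ hsub))
  -- the frontier of U is nonempty
  have hfr : ∃ y, y ∈ closure U ∧ y ∉ U := by
    by_contra h
    push_neg at h
    have hUcl : IsClosed U := by
      have : closure U = U := Set.Subset.antisymm h subset_closure
      rw [← this]; exact isClosed_closure
    have : U = ∅ ∨ U = Set.univ :=
      isClopen_iff.mp ⟨hUcl, comp_open x₀⟩
    rcases this with h' | h'
    · exact (h' ▸ hxU : x ∈ (∅ : Set X))
    · exact hUne h'
  obtain ⟨y, hycl, hyU⟩ := hfr
  have hyC : y ∈ C := hbd y hycl hyU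
  by_cases hmeet : (U ∩ Fr).Nonempty
  · obtain ⟨p, hpU, hpFr⟩ := hmeet
    obtain ⟨y₀, hy₀t, hpy₀⟩ := Set.mem_iUnion₂.mp (hcover hpFr)
    have hUeq : U = connectedComponentIn Cᶜ y₀ := by
      rw [hUdef, connectedComponentIn_eq hpU]
      exact (connectedComponentIn_eq hpy₀).symm
    refine Or.inr (Set.mem_biUnion hy₀t ?_)
    have hb : BoundedSubset (connectedComponentIn Cᶜ y₀) := hUeq ▸ hUb
    simp only [hLdef, if_pos hb]
    exact subset_closure (hUeq ▸ hxU)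
  · -- U misses the frontier of K, so U ⊆ interior K or U ⊆ Kᶜ
    have hsub : U ⊆ interior K ∪ Kᶜ := by
      intro z hz
      by_cases hzK : z ∈ K
      · by_cases hzi : z ∈ interior K
        · exact Or.inl hzi
        · exact absurd ⟨z, hz, hzK, hzi⟩ hmeet
      · exact Or.inr hzK
    have hdisj : Disjoint (interior K) Kᶜ :=
      Set.disjoint_compl_right_iff_subset.mpr interior_subset
    have hpre : IsPreconnected U := isPreconnected_connectedComponentIn
    rcases hpre.subset_or_subset isOpen_interior hK.isClosed.isOpen_compl hdisj hsub with
      h | h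
    · exact Or.inl (interior_subset (h hxU))
    · exfalso
      have : y ∈ closure (Kᶜ) := closure_mono h hycl
      rw [closure_compl] at this
      exact this (hCK hyC)
end

section
/- Let X be a connected, locally compact, locally connected, Hausdorff topological space and let C ⊆ X be a compact subset. Then every open neighborhood V of C contains all but finitely many of the connected components of X ∖ C; that is, the set of connected components of X ∖ C that are not contained in V is finite. -/
open Set

/-- closure of a component of the complement of a closed set stays within the component
union the set, in a locally connected space. -/
lemma closure_connectedComponentIn_subset {X : Type*} [TopologicalSpace X]
    [LocallyConnectedSpace X] {C : Set X} (hC : IsClosed C) {x : X} (hx : x ∈ Cᶜ) :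
    closure (connectedComponentIn Cᶜ x) ⊆ connectedComponentIn Cᶜ x ∪ C := by
  intro y hy
  by_cases hyC : y ∈ C
  · exact Or.inr hyC
  · left
    have hW : IsOpen (connectedComponentIn Cᶜ y) := hC.isOpen_compl.connectedComponentIn
    have hyW : y ∈ connectedComponentIn Cᶜ y := mem_connectedComponentIn hyC
    obtain ⟨z, hzW, hzU⟩ := mem_closure_iff.mp hy _ hW hyW
    rw [connectedComponentIn_eq hzU, ← connectedComponentIn_eq hzW]
    exact hyW

/-- Let `X` be a connected, locally compact, locally connected, Hausdorff topological space
and `C ⊆ X` compact.  Then every open neighborhood `V` of `C` contains all but finitely many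
of the connected components of `X ∖ C`: the set of components of `X ∖ C` not contained in `V`
is finite. -/
theorem stmt1 {X : Type*} [TopologicalSpace X] [ConnectedSpace X]
    [LocallyCompactSpace X] [LocallyConnectedSpace X] [T2Space X]
    (C : Set X) (hC : IsCompact C)
    (V : Set X) (hV : IsOpen V) (hCV : C ⊆ V) :
    {U : Set X | IsComponentOf Cᶜ U ∧ ¬ U ⊆ V}.Finite := by
  rcases C.eq_empty_or_nonempty with rfl | hCne
  · apply Set.Finite.subset (finite_singleton (univ : Set X))
    rintro U ⟨⟨x, -, rfl⟩, -⟩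
    simp [compl_empty, connectedComponentIn_univ, PreconnectedSpace.connectedComponent_eq_univ]
  · have hCcl : IsClosed C := hC.isClosed
    obtain ⟨K, hK, hCK, hKV⟩ := exists_compact_between hC hV hCV
    set L : Set X := K \ interior K with hL
    have hLcomp : IsCompact L := hK.diff isOpen_interior
    have hLC : L ⊆ Cᶜ := fun p hp hpC => hp.2 (hCK hpC)
    -- cover L by components
    have hcover : L ⊆ ⋃ p ∈ L, connectedComponentIn Cᶜ p := fun p hp =>
      mem_biUnion hp (mem_connectedComponentIn (hLC hp))
    obtain ⟨t, htL, htfin, htcover⟩ :=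
      hLcomp.elim_finite_subcover_image
        (fun p (_ : p ∈ L) => hCcl.isOpen_compl.connectedComponentIn) hcover
    apply Set.Finite.subset (htfin.image (fun p => connectedComponentIn Cᶜ p))
    rintro U ⟨⟨x, hx, rfl⟩, hUV⟩
    set U := connectedComponentIn Cᶜ x with hUdef
    -- U meets L
    have hUL : (U ∩ L).Nonempty := by
      by_contra hdisj
      rw [Set.not_nonempty_iff_eq_empty] at hdisj
      -- U ⊆ interior K ∪ (K)ᶜ, disjoint opens
      obtain ⟨q, hqU, hqV⟩ := not_subset.mp hUV
      have hqK : q ∉ K := fun h => hqV (hKV h)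
      have hsub : U ⊆ interior K ∪ Kᶜ := by
        intro p hp
        by_cases h2 : p ∈ interior K
        · exact Or.inl h2
        · by_cases h : p ∈ K
          · exact absurd (show p ∈ U ∩ L from ⟨hp, h, h2⟩)
              (by simp [hdisj])
          · exact Or.inr h
      have hdis : Disjoint (interior K) Kᶜ :=
        disjoint_compl_right.mono_left interior_subset
      rcases (isPreconnected_connectedComponentIn (x := x) (F := Cᶜ)).subset_or_subset
          isOpen_interior hK.isClosed.isOpen_compl hdis hsub with h | h
      · exact hqK (interior_subset (h hqU))
      · -- U avoids interior K, so closure U ⊆ U, U clopen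
        have hclos : closure U ⊆ (interior K)ᶜ :=
          closure_minimal (h.trans (compl_subset_compl.mpr interior_subset))
            isOpen_interior.isClosed_compl
        have hclU : closure U ⊆ U := by
          intro y hy
          rcases closure_connectedComponentIn_subset hCcl hx hy with h' | h'
          · exact h'
          · exact absurd (hCK h') (hclos hy)
        have hUclopen : IsClopen U :=
          ⟨isClosed_of_closure_subset hclU, hCcl.isOpen_compl.connectedComponentIn⟩
        rcases isClopen_iff.mp hUclopen with h0 | h1
        · exact (connectedComponentIn_nonempty_iff.mpr hx).ne_empty h0
        · obtain ⟨c, hc⟩ := hCne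
          have : c ∈ U := h1 ▸ mem_univ c
          exact (connectedComponentIn_subset Cᶜ x this) hc
    -- conclude
    obtain ⟨p, hpU, hpL⟩ := hUL
    obtain ⟨q, hq, hpq⟩ : ∃ q ∈ t, p ∈ connectedComponentIn Cᶜ q := by
      simpa using htcover hpL
    refine ⟨q, hq, ?_⟩
    rw [hUdef]
    exact (connectedComponentIn_eq hpq).trans
      (connectedComponentIn_eq (show p ∈ connectedComponentIn Cᶜ x from hpU)).symm
end

section
/- Let C ⊆ Y be compact and let B ⊆ Y/J be compact with p(C) ⊆ B. Then there is a compact set A ⊆ Y such that C ⊆ A and p(A) = B. -/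
open Pointwise Set TopologicalSpace

/-!
The interiors of compact sets in `Y` have open images under `p`, so finitely many of them
already cover `B`; their union `K` is compact with `B ⊆ p(K)`. Since `Y/J` is Hausdorff, `B` is
closed, hence `A = C ∪ (K ∩ p⁻¹(B))` is compact and `p(A) = B`.
-/

theorem exists_isCompact_subset_image_of_isOpenMap {X Z : Type*} [TopologicalSpace X]
    [WeaklyLocallyCompactSpace X] [TopologicalSpace Z] {f : X → Z} (hf : IsOpenMap f)
    {B : Set Z} (hB : IsCompact B) (hBf : B ⊆ range f) :
    ∃ K : Set X, IsCompact K ∧ B ⊆ f '' K := by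
  have hcover : B ⊆ ⋃ K : Compacts X, f '' interior K := by
    rintro _ hb
    obtain ⟨x, rfl⟩ := hBf hb
    obtain ⟨K, hK, hxK⟩ := exists_compact_mem_nhds x
    exact mem_iUnion.2 ⟨⟨K, hK⟩, mem_image_of_mem f (mem_interior_iff_mem_nhds.2 hxK)⟩
  have hdir : Directed (· ⊆ ·) fun K : Compacts X => f '' interior K :=
    directed_of_isDirected_le fun _ _ hKL => image_mono (interior_mono hKL)
  obtain ⟨K, hK⟩ := hB.elim_directed_cover _ (fun K => hf _ isOpen_interior) hcover hdir
  exact ⟨K, K.isCompact, hK.trans (image_mono interior_subset)⟩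

theorem exists_isCompact_image_eq_of_isOpenMap {X Z : Type*} [TopologicalSpace X]
    [WeaklyLocallyCompactSpace X] [TopologicalSpace Z] {f : X → Z} (hf : Continuous f)
    (hfo : IsOpenMap f) {B : Set Z} (hB : IsCompact B) (hBc : IsClosed B) (hBf : B ⊆ range f) :
    ∃ A : Set X, IsCompact A ∧ f '' A = B := by
  obtain ⟨K, hK, hBK⟩ := exists_isCompact_subset_image_of_isOpenMap hfo hB hBf
  refine ⟨K ∩ f ⁻¹' B, hK.inter_right (hBc.preimage hf), ?_⟩
  rw [image_inter_preimage, inter_eq_right.2 hBK]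

theorem properlyDiscontinuousSMul_of_finite_inter_self {J Y : Type*} [TopologicalSpace Y]
    [Group J] [MulAction J Y]
    (hpd : ∀ K : Set Y, IsCompact K → {j : J | ((j • K) ∩ K).Nonempty}.Finite) :
    ProperlyDiscontinuousSMul J Y where
  finite_disjoint_inter_image {K L} hK hL := by
    refine (hpd (K ∪ L) (hK.union hL)).subset fun j ⟨y, hyK, hyL⟩ => ?_
    exact ⟨y, smul_set_mono subset_union_left hyK, subset_union_right hyL⟩

theorem stmt3_general {Y : Type*} [TopologicalSpace Y] [LocallyCompactSpace Y] [T2Space Y]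
    {J : Type*} [Group J] [MulAction J Y]
    (hcont : ∀ j : J, Continuous fun y : Y => j • y)
    (hpd : ∀ K : Set Y, IsCompact K → {j : J | ((j • K) ∩ K).Nonempty}.Finite)
    (C : Set Y) (hC : IsCompact C)
    (B : Set (Quotient (MulAction.orbitRel J Y))) (hB : IsCompact B)
    (hCB : Quotient.mk (MulAction.orbitRel J Y) '' C ⊆ B) :
    ∃ A : Set Y, IsCompact A ∧ C ⊆ A ∧
      Quotient.mk (MulAction.orbitRel J Y) '' A = B := by
  have : ContinuousConstSMul J Y := ⟨hcont⟩
  have := properlyDiscontinuousSMul_of_finite_inter_self hpd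
  obtain ⟨A, hA, hAB⟩ := exists_isCompact_image_eq_of_isOpenMap
    (f := Quotient.mk (MulAction.orbitRel J Y)) continuous_quotient_mk' isOpenMap_quotient_mk'_mul
    hB hB.isClosed (Quotient.mk_surjective.range_eq ▸ subset_univ B)
  exact ⟨C ∪ A, hC.union hA, subset_union_left, by rw [image_union, hAB, union_eq_right.2 hCB]⟩

/-- Let `Y` be a locally compact Hausdorff space, and let the group `J` act on `Y` by
homeomorphisms, freely and properly discontinuously.  Let `p : Y → Y/J` be the quotient
map onto the orbit space.  If `C ⊆ Y` is compact and `B ⊆ Y/J` is compact with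
`p(C) ⊆ B`, then there is a compact set `A ⊆ Y` with `C ⊆ A` and `p(A) = B`. -/
theorem stmt3 {Y : Type*} [TopologicalSpace Y] [LocallyCompactSpace Y] [T2Space Y]
    {J : Type*} [Group J] [MulAction J Y]
    (hcont : ∀ j : J, Continuous fun y : Y => j • y)
    (hfree : ∀ (j : J) (y : Y), j • y = y → j = 1)
    (hpd : ∀ K : Set Y, IsCompact K → {j : J | ((j • K) ∩ K).Nonempty}.Finite)
    (C : Set Y) (hC : IsCompact C)
    (B : Set (Quotient (MulAction.orbitRel J Y))) (hB : IsCompact B)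
    (hCB : Quotient.mk (MulAction.orbitRel J Y) '' C ⊆ B) :
    ∃ A : Set Y, IsCompact A ∧ C ⊆ A ∧
      Quotient.mk (MulAction.orbitRel J Y) '' A = B :=
  stmt3_general hcont hpd C hC B hB hCB
end

section
/- Let C ⊆ Y be compact and let U be a connected component of the subspace Y ∖ J·C. Then (1) for every j ∈ J, the translate j • U is a connected component of Y ∖ J·C, and (2) the image p(U) is a connected component of the subspace (Y/J) ∖ p(C). -/
open Pointwise

/-- For `A ⊆ Y`, `orbitUnion J A` is `J·A = ⋃_{j ∈ J} j • A`. -/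
def orbitUnion (J : Type*) {Y : Type*} [SMul J Y] (A : Set Y) : Set Y :=
  ⋃ j : J, j • A

/-- Let `Y` be a connected, locally compact, locally connected, Hausdorff space, and let the
group `J` act on `Y` by homeomorphisms, freely and properly discontinuously, with quotient
map `p : Y → Y/J`.  If `C ⊆ Y` is compact and `U` is a connected component of `Y ∖ J·C`,
then (1) `j • U` is a connected component of `Y ∖ J·C` for every `j ∈ J`, and
(2) `p(U)` is a connected component of `(Y/J) ∖ p(C)`. -/
theorem stmt4 {Y : Type*} [TopologicalSpace Y] [ConnectedSpace Y]
    [LocallyCompactSpace Y] [LocallyConnectedSpace Y] [T2Space Y]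
    {J : Type*} [Group J] [MulAction J Y]
    (hcont : ∀ j : J, Continuous fun y : Y => j • y)
    (hfree : ∀ (j : J) (y : Y), j • y = y → j = 1)
    (hpd : ∀ K : Set Y, IsCompact K → {j : J | ((j • K) ∩ K).Nonempty}.Finite)
    (C : Set Y) (hC : IsCompact C)
    (U : Set Y) (hU : IsComponentOf (orbitUnion J C)ᶜ U) :
    (∀ j : J, IsComponentOf (orbitUnion J C)ᶜ (j • U)) ∧
      IsComponentOf (Quotient.mk (MulAction.orbitRel J Y) '' C)ᶜ
        (Quotient.mk (MulAction.orbitRel J Y) '' U) := by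
  haveI : ContinuousConstSMul J Y := ⟨hcont⟩
  classical
  set p : Y → Quotient (MulAction.orbitRel J Y) := Quotient.mk (MulAction.orbitRel J Y) with hp
  set F : Set Y := (orbitUnion J C)ᶜ with hF
  -- p identifies orbits
  have hpeq : ∀ {a b : Y}, p a = p b ↔ ∃ j : J, j • b = a := by
    intro a b
    constructor
    · intro h
      have := Quotient.exact h
      exact MulAction.mem_orbit_iff.1 (MulAction.orbitRel_apply.1 this)
    · rintro ⟨j, rfl⟩
      exact Quotient.sound (MulAction.orbitRel_apply.2 (MulAction.mem_orbit _ _))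
  -- translates of F
  have hsmulOU : ∀ j : J, j • orbitUnion J C = orbitUnion J C := by
    intro j
    simp only [orbitUnion, Set.smul_set_iUnion, smul_smul]
    exact Set.iUnion_congr_of_surjective _ (Group.mulLeft_bijective j).surjective
      (fun i => rfl)
  have hsmulF : ∀ j : J, j • F = F := by
    intro j
    rw [hF, Set.smul_set_compl, hsmulOU]
  -- `J·C` is closed, so `F` is open
  have hOUclosed : IsClosed (orbitUnion J C) := by
    rw [← isOpen_compl_iff, isOpen_iff_forall_mem_open]
    intro y hy
    obtain ⟨K, hKc, hKn⟩ := exists_compact_mem_nhds y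
    have hL : IsCompact (K ∪ C) := hKc.union hC
    have hS := hpd _ hL
    refine ⟨interior K \ ⋃ j ∈ {j : J | ((j • (K ∪ C)) ∩ (K ∪ C)).Nonempty}, j • C,
      ?_, ?_, ?_⟩
    · rintro z ⟨hz1, hz2⟩ hz3
      obtain ⟨j, hj⟩ := Set.mem_iUnion.1 hz3
      refine hz2 (Set.mem_biUnion ?_ hj)
      exact ⟨z, ⟨Set.smul_set_mono Set.subset_union_right hj,
        Set.subset_union_left (interior_subset hz1)⟩⟩
    · refine IsOpen.sdiff isOpen_interior (Set.Finite.isClosed_biUnion hS ?_)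
      intro j _
      exact (hC.smul j).isClosed
    · refine ⟨mem_interior_iff_mem_nhds.2 hKn, ?_⟩
      intro hmem
      obtain ⟨j, -, hj⟩ := Set.mem_iUnion₂.1 hmem
      exact hy (Set.mem_iUnion.2 ⟨j, hj⟩)
  have hFopen : IsOpen F := hOUclosed.isOpen_compl
  -- part (1), in general form
  have part1 : ∀ (V : Set Y), IsComponentOf F V → ∀ j : J, IsComponentOf F (j • V) := by
    rintro V ⟨x, hxF, rfl⟩ j
    refine ⟨j • x, ?_, ?_⟩
    · rw [← hsmulF j]; exact Set.smul_mem_smul_set hxF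
    · have := (Homeomorph.smul j (α := Y)).image_connectedComponentIn hxF
      simpa [hsmulF j] using this
  -- saturation
  have hsat : ∀ A : Set Y, p ⁻¹' (p '' A) = orbitUnion J A := by
    intro A
    ext y
    simp only [Set.mem_preimage, Set.mem_image, orbitUnion, Set.mem_iUnion,
      Set.mem_smul_set]
    constructor
    · rintro ⟨a, haA, hay⟩
      obtain ⟨j, hj⟩ := hpeq.1 hay
      exact ⟨j⁻¹, a, haA, by rw [← hj, inv_smul_smul]⟩
    · rintro ⟨j, a, haA, rfl⟩
      exact ⟨a, haA, hpeq.2 ⟨j⁻¹, inv_smul_smul j a⟩⟩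
  -- p is an open map
  have hpopen : ∀ {V : Set Y}, IsOpen V → IsOpen (p '' V) := by
    intro V hV
    have hq := isQuotientMap_quotient_mk' (s := MulAction.orbitRel J Y)
    rw [← hq.isOpen_preimage]
    show IsOpen (p ⁻¹' (p '' V))
    rw [hsat V]
    exact isOpen_iUnion fun j => hV.smul j
  -- p kills translation
  have hpsmul : ∀ (j : J) (A : Set Y), p '' (j • A) = p '' A := by
    intro j A
    rw [← Set.image_smul, Set.image_image]
    exact Set.image_congr fun a _ => hpeq.2 ⟨j, rfl⟩
  obtain ⟨x, hxF, hUx⟩ := hU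
  refine ⟨part1 U ⟨x, hxF, hUx⟩, ?_⟩
  set F' : Set (Quotient (MulAction.orbitRel J Y)) := (p '' C)ᶜ with hF'
  have hmapsF : ∀ {y : Y}, y ∈ F ↔ p y ∈ F' := by
    intro y
    change y ∉ orbitUnion J C ↔ p y ∉ p '' C
    rw [← hsat C]
    exact Iff.rfl
  have hpxF' : p x ∈ F' := hmapsF.1 hxF
  set V : Set (Quotient (MulAction.orbitRel J Y)) := connectedComponentIn F' (p x) with hV
  -- Claim A : images of components of points mapping into V land in V
  have claimA : ∀ y : Y, p y ∈ V → p '' connectedComponentIn F y ⊆ V := by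
    intro y hyV
    have hyF' : p y ∈ F' := connectedComponentIn_subset F' (p x) hyV
    have himg : IsPreconnected (p '' connectedComponentIn F y) :=
      isPreconnected_connectedComponentIn.image p continuous_quotient_mk'.continuousOn
    have hsub : p '' connectedComponentIn F y ⊆ F' := by
      rintro q ⟨a, ha, rfl⟩
      exact hmapsF.1 (connectedComponentIn_subset F y ha)
    rw [hV, connectedComponentIn_eq hyV]
    exact himg.subset_connectedComponentIn
      ⟨y, mem_connectedComponentIn (hmapsF.2 hyF'), rfl⟩ hsub
  -- Claim B : two component images that meet are equal
  have claimB : ∀ y z : Y, y ∈ F → z ∈ F →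
      (p '' connectedComponentIn F y ∩ p '' connectedComponentIn F z).Nonempty →
      p '' connectedComponentIn F y = p '' connectedComponentIn F z := by
    rintro y z hyF hzF ⟨q, ⟨a, ha, rfl⟩, ⟨b, hb, hba⟩⟩
    obtain ⟨j, rfl⟩ := hpeq.1 hba
    have hjz : j⁻¹ • connectedComponentIn F z = connectedComponentIn F (j⁻¹ • z) := by
      have := (Homeomorph.smul (j⁻¹) (α := Y)).image_connectedComponentIn hzF
      simpa [hsmulF j⁻¹] using this
    have hja : a ∈ connectedComponentIn F (j⁻¹ • z) := by
      rw [← hjz]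
      exact ⟨j • a, hb, inv_smul_smul j a⟩
    have h1 : connectedComponentIn F y = connectedComponentIn F (j⁻¹ • z) := by
      rw [connectedComponentIn_eq ha, connectedComponentIn_eq hja]
    rw [h1, ← hjz, hpsmul]
  -- the open cover of V
  set u : Set (Quotient (MulAction.orbitRel J Y)) := p '' U with hu
  have huU : u = p '' connectedComponentIn F x := by rw [hu, hUx]
  set v : Set (Quotient (MulAction.orbitRel J Y)) :=
    ⋃ y : {y : Y // p y ∈ V ∧ p '' connectedComponentIn F y ≠ u},
      p '' connectedComponentIn F y.1 with hv
  have hCopen : ∀ y : Y, IsOpen (connectedComponentIn F y) := fun y =>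
    hFopen.connectedComponentIn
  have huo : IsOpen u := by rw [huU]; exact hpopen (hCopen x)
  have hvo : IsOpen v := isOpen_iUnion fun y => hpopen (hCopen y.1)
  have hdis : Disjoint u v := by
    rw [Set.disjoint_left]
    rintro q hqu hqv
    obtain ⟨⟨y, hyV, hyne⟩, hqy⟩ := Set.mem_iUnion.1 hqv
    have hyF : y ∈ F := hmapsF.2 (connectedComponentIn_subset F' (p x) hyV)
    exact hyne ((claimB y x hyF hxF ⟨q, hqy, by rw [huU] at hqu; exact hqu⟩).trans huU.symm)
  have hVsub : V ⊆ u ∪ v := by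
    intro q hqV
    obtain ⟨y, rfl⟩ := Quotient.exists_rep q
    have hyF : y ∈ F := hmapsF.2 (connectedComponentIn_subset F' (p x) hqV)
    have hqy : p y ∈ p '' connectedComponentIn F y :=
      ⟨y, mem_connectedComponentIn hyF, rfl⟩
    by_cases hcase : p '' connectedComponentIn F y = u
    · exact Or.inl (hcase ▸ hqy)
    · exact Or.inr (Set.mem_iUnion.2 ⟨⟨y, hqV, hcase⟩, hqy⟩)
  have hpxV : p x ∈ V := mem_connectedComponentIn hpxF'
  have hVu : V ⊆ u :=
    isPreconnected_connectedComponentIn.subset_left_of_subset_union huo hvo hdis hVsub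
      ⟨p x, hpxV, ⟨x, hUx ▸ mem_connectedComponentIn hxF, rfl⟩⟩
  have huV : u ⊆ V := by rw [huU]; exact claimA x hpxV
  exact ⟨p x, hpxF', (hVu.antisymm huV).symm⟩
end

section
/- Let C ⊆ Y be a nonempty compact subset and let U be an unbounded connected component of Y ∖ J·C. Then the frontier of U (the closure of U minus U) is an unbounded subset of J·C. -/
open Pointwise

/-- `Y` is one-ended: it is not compact, and for every compact `K ⊆ Y` exactly one
connected component of `Y ∖ K` is unbounded. -/
def OneEnded (Y : Type*) [TopologicalSpace Y] : Prop :=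
  ¬ IsCompact (Set.univ : Set Y) ∧
    ∀ K : Set Y, IsCompact K →
      ∃! U : Set Y, IsComponentOf Kᶜ U ∧ ¬ BoundedSubset U

lemma BoundedSubset.mono {X : Type*} [TopologicalSpace X] {S T : Set X} (h : S ⊆ T)
    (hT : BoundedSubset T) : BoundedSubset S := by
  obtain ⟨K, hK, hTK⟩ := hT; exact ⟨K, hK, h.trans hTK⟩

lemma BoundedSubset.union {X : Type*} [TopologicalSpace X] {S T : Set X}
    (hS : BoundedSubset S) (hT : BoundedSubset T) : BoundedSubset (S ∪ T) := by
  obtain ⟨K, hK, hSK⟩ := hS; obtain ⟨L, hL, hTL⟩ := hT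
  exact ⟨K ∪ L, hK.union hL, Set.union_subset_union hSK hTL⟩

lemma boundedSubset_biUnion {X : Type*} [TopologicalSpace X] {ι : Type*} {t : Set ι}
    (ht : t.Finite) {f : ι → Set X} (h : ∀ i ∈ t, BoundedSubset (f i)) :
    BoundedSubset (⋃ i ∈ t, f i) := by
  classical
  choose! g hg1 hg2 using h
  exact ⟨⋃ i ∈ t, g i, ht.isCompact_biUnion hg1, Set.iUnion₂_mono hg2⟩

/-- A connected component of an open set `F` is relatively closed in `F`. -/
lemma closure_connectedComponentIn_inter {X : Type*} [TopologicalSpace X]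
    [LocallyConnectedSpace X] {F : Set X} (hF : IsOpen F) (x : X) :
    closure (connectedComponentIn F x) ∩ F ⊆ connectedComponentIn F x := by
  rintro y ⟨hyc, hyF⟩
  have hVopen : IsOpen (connectedComponentIn F y) := hF.connectedComponentIn
  obtain ⟨z, hz1, hz2⟩ := _root_.mem_closure_iff.mp hyc _ hVopen (mem_connectedComponentIn hyF)
  have h1 : connectedComponentIn F y = connectedComponentIn F z := connectedComponentIn_eq hz1
  have h2 : connectedComponentIn F x = connectedComponentIn F z := connectedComponentIn_eq hz2
  rw [h2, ← h1]
  exact mem_connectedComponentIn hyF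

/-- In a one-ended space, the complement of the unbounded component of `Kᶜ` is bounded. -/
lemma compl_unbounded_component_bounded {Y : Type*} [TopologicalSpace Y] [ConnectedSpace Y]
    [WeaklyLocallyCompactSpace Y] [LocallyConnectedSpace Y] [T2Space Y]
    (hY : OneEnded Y) {K : Set Y} (hK : IsCompact K) (hKne : K.Nonempty)
    {W : Set Y} (hWcomp : IsComponentOf Kᶜ W) (hWunb : ¬ BoundedSubset W) :
    BoundedSubset Wᶜ := by
  obtain ⟨K2, hK2, hKK2⟩ := exists_compact_superset hK
  have hK2cl : IsClosed K2 := hK2.isClosed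
  have hKcop : IsOpen Kᶜ := hK.isClosed.isOpen_compl
  set S : Set Y := frontier K2 with hS
  have hSK2 : S ⊆ K2 := hK2cl.frontier_subset
  have hScomp : IsCompact S := hK2.of_isClosed_subset isClosed_frontier hSK2
  have hSKc : S ⊆ Kᶜ := by
    intro s hs hsK
    exact hs.2 (hKK2 hsK)
  -- finite subcover of the frontier by components of Kᶜ
  obtain ⟨t, hts, htfin, htcov⟩ :=
    hScomp.elim_finite_subcover_image (b := S) (c := fun s => connectedComponentIn Kᶜ s)
      (fun s _ => hKcop.connectedComponentIn)
      (fun s hs => Set.mem_biUnion hs (mem_connectedComponentIn (hSKc hs)))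
  obtain ⟨W0, hW0, huniq⟩ := hY.2 K hK
  have hWW0 : W = W0 := huniq W ⟨hWcomp, hWunb⟩
  -- main inclusion
  have hincl : Wᶜ ⊆ K2 ∪ ⋃ s ∈ t, connectedComponentIn Kᶜ s := by
    intro y hyW
    by_cases hyK2 : y ∈ K2
    · exact Or.inl hyK2
    have hyKc : y ∈ Kᶜ := fun hyK => hyK2 (interior_subset (hKK2 hyK))
    set V : Set Y := connectedComponentIn Kᶜ y with hV
    have hVopen : IsOpen V := hKcop.connectedComponentIn
    have hVpre : IsPreconnected V := isPreconnected_connectedComponentIn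
    have hyV : y ∈ V := mem_connectedComponentIn hyKc
    have hVKc : V ⊆ Kᶜ := connectedComponentIn_subset _ _
    -- the frontier of V is nonempty and contained in K
    have hfr : (closure V \ V).Nonempty := by
      by_contra h
      rw [Set.not_nonempty_iff_eq_empty, Set.diff_eq_empty] at h
      have hVcl : IsClosed V := closure_eq_iff_isClosed.mp (subset_antisymm h subset_closure)
      rcases isClopen_iff.mp ⟨hVcl, hVopen⟩ with h0 | h1
      · rw [h0] at hyV; exact hyV
      · obtain ⟨k, hk⟩ := hKne
        exact hVKc (h1 ▸ Set.mem_univ k) hk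
    obtain ⟨z, hzc, hzV⟩ := hfr
    have hzK : z ∈ K := by
      by_contra hzK
      exact hzV (closure_connectedComponentIn_inter hKcop y ⟨hzc, hzK⟩)
    obtain ⟨v, hvint, hvV⟩ :=
      _root_.mem_closure_iff.mp hzc (interior K2) isOpen_interior (hKK2 hzK)
    -- V meets the frontier of K2
    have hmeet : (V ∩ S).Nonempty := by
      by_contra h
      rw [Set.not_nonempty_iff_eq_empty] at h
      have hsub : V ⊆ interior K2 ∪ K2ᶜ := by
        intro p hp
        by_cases hpK2 : p ∈ K2
        · left
          by_contra hpint
          have hmem : p ∈ V ∩ S := ⟨hp, ⟨subset_closure hpK2, hpint⟩⟩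
          rw [h] at hmem
          exact absurd hmem (Set.notMem_empty p)
        · exact Or.inr hpK2
      have hdisj : Disjoint (interior K2) K2ᶜ :=
        Set.disjoint_compl_right_iff_subset.mpr interior_subset
      rcases hVpre.subset_or_subset isOpen_interior hK2cl.isOpen_compl hdisj hsub with h1 | h2
      · exact hyK2 (interior_subset (h1 hyV))
      · exact h2 hvV (interior_subset hvint)
    obtain ⟨w, hwV, hwS⟩ := hmeet
    obtain ⟨s, hst, hws⟩ := Set.mem_iUnion₂.mp (htcov hwS)
    have heq : connectedComponentIn Kᶜ s = V := by
      rw [connectedComponentIn_eq hws, hV, connectedComponentIn_eq hwV]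
    exact Or.inr (Set.mem_biUnion hst (heq ▸ hyV))
  -- each component in the cover, minus W, is bounded
  have hbd : ∀ s ∈ t, BoundedSubset (connectedComponentIn Kᶜ s \ W) := by
    intro s hst
    by_cases hb : BoundedSubset (connectedComponentIn Kᶜ s)
    · exact hb.mono Set.diff_subset
    · have : connectedComponentIn Kᶜ s = W := by
        rw [hWW0]
        exact huniq _ ⟨⟨s, hSKc (hts hst), rfl⟩, hb⟩
      rw [this, Set.diff_self]
      exact ⟨∅, isCompact_empty, subset_rfl⟩
  have hfinal : Wᶜ ⊆ K2 ∪ ⋃ s ∈ t, (connectedComponentIn Kᶜ s \ W) := by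
    intro y hy
    rcases hincl hy with h1 | h2
    · exact Or.inl h1
    · obtain ⟨s, hst, hys⟩ := Set.mem_iUnion₂.mp h2
      exact Or.inr (Set.mem_biUnion hst ⟨hys, hy⟩)
  exact (BoundedSubset.union ⟨K2, hK2, subset_rfl⟩ (boundedSubset_biUnion htfin hbd)).mono hfinal

/-- Let `Y` be a connected, locally compact, locally connected, Hausdorff, one-ended space,
and let the infinite group `J` act on `Y` by homeomorphisms, properly discontinuously.
If `C ⊆ Y` is nonempty and compact, and `U` is an unbounded connected component of
`Y ∖ J·C`, then the frontier `closure U ∖ U` of `U` is an unbounded subset of `J·C`. -/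
theorem stmt5 {Y : Type*} [TopologicalSpace Y] [ConnectedSpace Y]
    [LocallyCompactSpace Y] [LocallyConnectedSpace Y] [T2Space Y]
    (hY : OneEnded Y)
    {J : Type*} [Group J] [Infinite J] [MulAction J Y]
    (hcont : ∀ j : J, Continuous fun y : Y => j • y)
    (hpd : ∀ K : Set Y, IsCompact K → {j : J | ((j • K) ∩ K).Nonempty}.Finite)
    (C : Set Y) (hCne : C.Nonempty) (hC : IsCompact C)
    (U : Set Y) (hU : IsComponentOf (orbitUnion J C)ᶜ U)
    (hUnb : ¬ BoundedSubset U) :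
    closure U \ U ⊆ orbitUnion J C ∧ ¬ BoundedSubset (closure U \ U) := by
  classical
  haveI : ContinuousConstSMul J Y := ⟨hcont⟩
  set O := orbitUnion J C with hOdef
  -- `O` is closed, being a locally finite union of compact sets
  have hlf : LocallyFinite (fun j : J => j • C) := by
    intro y
    obtain ⟨L, hLc, hLn⟩ := exists_compact_mem_nhds y
    refine ⟨L, hLn, ?_⟩
    refine (hpd (L ∪ C) (hLc.union hC)).subset ?_
    rintro j ⟨p, hp1, hp2⟩
    exact ⟨p, Set.smul_set_mono Set.subset_union_right hp1, Or.inl hp2⟩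
  have hOcl : IsClosed O := hlf.isClosed_iUnion fun j => (hC.smul j).isClosed
  have hOop : IsOpen Oᶜ := hOcl.isOpen_compl
  obtain ⟨x, hxO, hUx⟩ := hU
  subst hUx
  set U := connectedComponentIn Oᶜ x with hUdef
  have hUopen : IsOpen U := hOop.connectedComponentIn
  have hUO : U ⊆ Oᶜ := connectedComponentIn_subset _ _
  -- part 1
  have part1 : closure U \ U ⊆ O := by
    rintro y ⟨hyc, hyU⟩
    by_contra hyO
    exact hyU (closure_connectedComponentIn_inter hOop x ⟨hyc, hyO⟩)
  -- `O` is unbounded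
  have hOunb : ¬ BoundedSubset O := by
    rintro ⟨L, hLc, hOL⟩
    obtain ⟨c, hc⟩ := hCne
    have hcL : c ∈ L := hOL (Set.mem_iUnion.mpr ⟨1, ⟨c, hc, one_smul J c⟩⟩)
    have huniv : {j : J | ((j • L) ∩ L).Nonempty} = Set.univ := by
      ext j
      simp only [Set.mem_setOf_eq, Set.mem_univ, iff_true]
      exact ⟨j • c, Set.smul_mem_smul_set hcL,
        hOL (Set.mem_iUnion.mpr ⟨j, Set.smul_mem_smul_set hc⟩)⟩
    have := hpd L hLc
    rw [huniv] at this
    exact Set.infinite_univ this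
  refine ⟨part1, ?_⟩
  -- part 2
  rintro ⟨K0, hK0, hfrK0⟩
  set K : Set Y := K0 ∪ C with hKdef
  have hKc : IsCompact K := hK0.union hC
  have hKne : K.Nonempty := hCne.mono Set.subset_union_right
  obtain ⟨W0, ⟨hW0comp, hW0unb⟩, huniq⟩ := hY.2 K hKc
  have hWcb : BoundedSubset W0ᶜ :=
    compl_unbounded_component_bounded hY hKc hKne hW0comp hW0unb
  obtain ⟨w, hwK, hW0eq⟩ := hW0comp
  have hW0pre : IsPreconnected W0 := by
    rw [hW0eq]; exact isPreconnected_connectedComponentIn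
  have hW0sub : W0 ⊆ Kᶜ := by
    rw [hW0eq]; exact connectedComponentIn_subset _ _
  have hcover : W0 ⊆ U ∪ (closure U)ᶜ := by
    intro p hp
    by_cases hpc : p ∈ closure U
    · left
      by_contra hpU
      exact (hW0sub hp) (Or.inl (hfrK0 ⟨hpc, hpU⟩))
    · exact Or.inr hpc
  have hdisj : Disjoint U (closure U)ᶜ :=
    Set.disjoint_compl_right_iff_subset.mpr subset_closure
  rcases hW0pre.subset_or_subset hUopen isClosed_closure.isOpen_compl hdisj hcover with h1 | h2
  · -- W0 ⊆ U, so (closure U)ᶜ is bounded, so O is bounded: contradiction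
    have hcUc : (closure U)ᶜ ⊆ W0ᶜ := fun p hp hpW => hp (subset_closure (h1 hpW))
    have hbd1 : BoundedSubset (closure U)ᶜ := hWcb.mono hcUc
    have hOsub : O ⊆ (closure U \ U) ∪ (closure U)ᶜ := by
      intro p hp
      by_cases hpc : p ∈ closure U
      · exact Or.inl ⟨hpc, fun hpU => (hUO hpU) hp⟩
      · exact Or.inr hpc
    exact hOunb (((BoundedSubset.mono hfrK0 ⟨K0, hK0, subset_rfl⟩).union hbd1).mono hOsub)
  · -- W0 ⊆ (closure U)ᶜ, so U is bounded: contradiction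
    exact hUnb (hWcb.mono fun p hp hpW => (h2 hpW) (subset_closure hp))
end

section
/- Let C ⊆ Y be compact. Then there are finitely many connected components U₁, …, Uₙ of Y ∖ J·C such that every J-unbounded connected component U of Y ∖ J·C satisfies U = j • Uᵢ for some j ∈ J and some i ∈ {1, …, n}. In other words, up to translation by J there are only finitely many J-unbounded connected components of Y ∖ J·C. -/
open Pointwise

/-- A subset of `Y` is `J`-bounded if it is contained in `J·D` for some compact `D ⊆ Y`. -/
def JBounded (J : Type*) {Y : Type*} [TopologicalSpace Y] [SMul J Y] (S : Set Y) : Prop :=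
  ∃ D : Set Y, IsCompact D ∧ S ⊆ orbitUnion J D

theorem mem_orbitUnion {J Y : Type*} [SMul J Y] {A : Set Y} {y : Y} :
    y ∈ orbitUnion J A ↔ ∃ j : J, y ∈ j • A := Set.mem_iUnion

/-- `orbitUnion` is invariant under the action. -/
theorem smul_orbitUnion {J Y : Type*} [Group J] [MulAction J Y] (g : J) (A : Set Y) :
    g • orbitUnion J A = orbitUnion J A := by
  have h1 : g • orbitUnion J A = ⋃ j : J, (g * j) • A := by
    rw [orbitUnion, Set.smul_set_iUnion]
    simp_rw [smul_smul]
  rw [h1, orbitUnion]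
  ext y
  simp only [Set.mem_iUnion]
  exact ⟨fun ⟨j, hj⟩ => ⟨g * j, hj⟩,
    fun ⟨j, hj⟩ => ⟨g⁻¹ * j, by rwa [mul_inv_cancel_left]⟩⟩

/-- The orbit union of a compact set under a properly discontinuous action is closed. -/
theorem isClosed_orbitUnion {Y : Type*} [TopologicalSpace Y] [T2Space Y] [LocallyCompactSpace Y]
    {J : Type*} [Group J] [MulAction J Y] [ContinuousConstSMul J Y]
    (hpd : ∀ K : Set Y, IsCompact K → {j : J | ((j • K) ∩ K).Nonempty}.Finite)
    {A : Set Y} (hA : IsCompact A) : IsClosed (orbitUnion J A) := by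
  rw [← isOpen_compl_iff, isOpen_iff_forall_mem_open]
  intro y hy
  obtain ⟨K, hKcomp, hKnhds⟩ := exists_compact_mem_nhds y
  have hfin : {j : J | ((j • (A ∪ K)) ∩ (A ∪ K)).Nonempty}.Finite := hpd _ (hA.union hKcomp)
  set B : Set Y := ⋃ j ∈ {j : J | ((j • (A ∪ K)) ∩ (A ∪ K)).Nonempty}, j • A with hB
  have hBclosed : IsClosed B :=
    hfin.isClosed_biUnion fun j _ => (hA.smul j).isClosed
  refine ⟨interior K ∩ Bᶜ, ?_, (isOpen_interior.inter hBclosed.isOpen_compl), ?_, ?_⟩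
  · rintro z ⟨hzK, hzB⟩ hz
    obtain ⟨j, hj⟩ := mem_orbitUnion.mp hz
    apply hzB
    have hjS : ((j • (A ∪ K)) ∩ (A ∪ K)).Nonempty := by
      refine ⟨z, ?_, Or.inr (interior_subset hzK)⟩
      rw [Set.smul_set_union]
      exact Or.inl hj
    exact Set.mem_biUnion hjS hj
  · exact mem_interior_iff_mem_nhds.mpr hKnhds
  · intro hyB
    apply hy
    simp only [hB, Set.mem_iUnion] at hyB
    obtain ⟨j, _, hj⟩ := hyB
    exact mem_orbitUnion.mpr ⟨j, hj⟩

/-- Translating a connected component of an invariant set gives a connected component. -/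
theorem smul_connectedComponentIn {Y : Type*} [TopologicalSpace Y]
    {J : Type*} [Group J] [MulAction J Y] [ContinuousConstSMul J Y]
    (g : J) {F : Set Y} {x : Y} (hx : x ∈ F) :
    g • connectedComponentIn F x = connectedComponentIn (g • F) (g • x) := by
  have := (Homeomorph.smul (α := Y) g).image_connectedComponentIn (s := F) (x := x) hx
  simpa using this

/-- Let `Y` be a connected, locally compact, locally connected, Hausdorff space, and let the
group `J` act on `Y` by homeomorphisms, freely and properly discontinuously.  If `C ⊆ Y` is
compact, then there are finitely many connected components `U₁, …, Uₙ` of `Y ∖ J·C` such that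
every `J`-unbounded connected component of `Y ∖ J·C` is a `J`-translate of some `Uᵢ`. -/
theorem stmt7 {Y : Type*} [TopologicalSpace Y] [ConnectedSpace Y]
    [LocallyCompactSpace Y] [LocallyConnectedSpace Y] [T2Space Y]
    {J : Type*} [Group J] [MulAction J Y]
    (hcont : ∀ j : J, Continuous fun y : Y => j • y)
    (hfree : ∀ (j : J) (y : Y), j • y = y → j = 1)
    (hpd : ∀ K : Set Y, IsCompact K → {j : J | ((j • K) ∩ K).Nonempty}.Finite)
    (C : Set Y) (hC : IsCompact C) :
    ∃ (n : ℕ) (V : Fin n → Set Y),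
      (∀ i, IsComponentOf (orbitUnion J C)ᶜ (V i)) ∧
      ∀ U : Set Y, IsComponentOf (orbitUnion J C)ᶜ U → ¬ JBounded J U →
        ∃ (j : J) (i : Fin n), U = j • V i := by
  haveI : ContinuousConstSMul J Y := ⟨hcont⟩
  rcases C.eq_empty_or_nonempty with hCe | ⟨c, hc⟩
  · -- trivial case: C is empty
    subst hCe
    have horb : orbitUnion J (∅ : Set Y) = ∅ := by
      simp [orbitUnion]
    obtain ⟨y₀⟩ : Nonempty Y := inferInstance
    refine ⟨1, fun _ => connectedComponentIn (orbitUnion J (∅ : Set Y))ᶜ y₀, ?_, ?_⟩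
    · intro _
      exact ⟨y₀, by simp [horb], rfl⟩
    · rintro U ⟨x, hx, rfl⟩ _
      refine ⟨1, 0, ?_⟩
      rw [one_smul]
      rw [horb, Set.compl_empty, connectedComponentIn_univ, connectedComponentIn_univ,
        PreconnectedSpace.connectedComponent_eq_univ, PreconnectedSpace.connectedComponent_eq_univ]
  -- main case
  set F : Set Y := (orbitUnion J C)ᶜ with hF
  have hJCclosed : IsClosed (orbitUnion J C) := isClosed_orbitUnion hpd hC
  have hFopen : IsOpen F := hJCclosed.isOpen_compl
  obtain ⟨N, hNcomp, hCN⟩ := exists_compact_superset hC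
  have hJNclosed : IsClosed (orbitUnion J N) := isClosed_orbitUnion hpd hNcomp
  -- J·C is inside the interior of J·N
  have hJCO : orbitUnion J C ⊆ interior (orbitUnion J N) := by
    rintro y hy
    obtain ⟨j, hj⟩ := mem_orbitUnion.mp hy
    have h1 : j • interior N ⊆ interior (orbitUnion J N) := by
      apply interior_maximal _ ((isOpen_interior).smul j)
      refine (Set.smul_set_mono interior_subset).trans ?_
      exact Set.subset_iUnion (fun j : J => j • N) j
    exact h1 (Set.smul_set_mono hCN hj)
  -- the compact "window" T
  set T : Set Y := frontier (orbitUnion J N) ∩ N with hT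
  have hTF : T ⊆ F := by
    rintro z ⟨hz1, _⟩
    intro hzC
    exact hz1.2 (hJCO hzC)
  have hTcomp : IsCompact T := hNcomp.inter_left isClosed_frontier
  -- cover T by components of F
  have hcover : T ⊆ ⋃ t : T, connectedComponentIn F (t : Y) := by
    intro z hz
    exact Set.mem_iUnion.mpr ⟨⟨z, hz⟩, mem_connectedComponentIn (hTF hz)⟩
  obtain ⟨s, hs⟩ := hTcomp.elim_finite_subcover
    (fun t : T => connectedComponentIn F (t : Y))
    (fun _ => hFopen.connectedComponentIn) hcover
  refine ⟨s.card, fun i => connectedComponentIn F ((s.equivFin.symm i : T) : Y), ?_, ?_⟩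
  · intro i
    exact ⟨_, hTF (s.equivFin.symm i : T).2, rfl⟩
  · rintro U ⟨x₀, hx₀F, rfl⟩ hUnb
    set U := connectedComponentIn F x₀ with hU
    have hUopen : IsOpen U := hFopen.connectedComponentIn
    have hx₀U : x₀ ∈ U := mem_connectedComponentIn hx₀F
    have hUF : U ⊆ F := connectedComponentIn_subset F x₀
    -- U is not all of Y
    have hUne : U ≠ Set.univ := by
      intro h
      have hcJC : c ∈ orbitUnion J C := mem_orbitUnion.mpr ⟨1, by rwa [one_smul]⟩
      exact (hUF (h ▸ Set.mem_univ c)) hcJC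
    -- the frontier of U is nonempty
    have hfrne : (frontier U).Nonempty := by
      rw [Set.nonempty_iff_ne_empty]
      intro h
      exact hUne ((isClopen_iff_frontier_eq_empty.mpr h).eq_univ ⟨x₀, hx₀U⟩)
    obtain ⟨y, hyfr⟩ := hfrne
    have hyclU : y ∈ closure U := frontier_subset_closure hyfr
    -- the frontier point lies in J·C
    have hyJC : y ∈ orbitUnion J C := by
      by_contra hyF
      have hWopen : IsOpen (connectedComponentIn F y) := hFopen.connectedComponentIn
      have hyW : y ∈ connectedComponentIn F y := mem_connectedComponentIn hyF
      obtain ⟨z, hzW, hzU⟩ := mem_closure_iff.mp hyclU _ hWopen hyW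
      have h1 : connectedComponentIn F y = connectedComponentIn F z := connectedComponentIn_eq hzW
      have h2 : U = connectedComponentIn F z := connectedComponentIn_eq hzU
      have : y ∈ U := by rw [h2, ← h1]; exact hyW
      exact hyfr.2 (by rwa [hUopen.interior_eq])
    -- U meets the interior of J·N
    have hUO : (U ∩ interior (orbitUnion J N)).Nonempty := by
      obtain ⟨z, hz1, hz2⟩ := mem_closure_iff.mp hyclU _ isOpen_interior (hJCO hyJC)
      exact ⟨z, hz2, hz1⟩
    -- U is not contained in J·N
    obtain ⟨u, huU, huN⟩ := Set.not_subset.mp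
      (fun h => hUnb ⟨N, hNcomp, h⟩ : ¬ U ⊆ orbitUnion J N)
    -- hence U meets the frontier of J·N
    have hUfr : (U ∩ frontier (orbitUnion J N)).Nonempty := by
      by_contra hemp
      rw [Set.not_nonempty_iff_eq_empty] at hemp
      have hpre : IsPreconnected U := isPreconnected_connectedComponentIn
      have := hpre (interior (orbitUnion J N)) (orbitUnion J N)ᶜ isOpen_interior
        hJNclosed.isOpen_compl ?_ ⟨hUO.choose, hUO.choose_spec.1, hUO.choose_spec.2⟩
        ⟨u, huU, huN⟩
      · obtain ⟨z, _, hz1, hz2⟩ := this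
        exact hz2 (interior_subset hz1)
      · intro z hzU
        rcases Classical.em (z ∈ orbitUnion J N) with h | h
        · left
          have hznfr : z ∉ frontier (orbitUnion J N) := fun hzf =>
            Set.eq_empty_iff_forall_notMem.mp hemp z ⟨hzU, hzf⟩
          rcases Classical.em (z ∈ interior (orbitUnion J N)) with h' | h'
          · exact h'
          · exact absurd ⟨subset_closure h, h'⟩ hznfr
        · exact Or.inr h
    obtain ⟨w, hwU, hwfr⟩ := hUfr
    -- find a translate of w in T
    obtain ⟨j, hwj⟩ := mem_orbitUnion.mp (hJNclosed.frontier_subset hwfr)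
    have ht'N : j⁻¹ • w ∈ N := Set.mem_smul_set_iff_inv_smul_mem.mp hwj
    have ht'fr : j⁻¹ • w ∈ frontier (orbitUnion J N) := by
      have h1 : j⁻¹ • w ∈ j⁻¹ • frontier (orbitUnion J N) := Set.smul_mem_smul_set hwfr
      have h2 : j⁻¹ • frontier (orbitUnion J N) = frontier (orbitUnion J N) := by
        have := (Homeomorph.smul (α := Y) (j⁻¹ : J)).image_frontier (orbitUnion J N)
        simpa [smul_orbitUnion] using this
      rwa [h2] at h1
    have ht'T : j⁻¹ • w ∈ T := ⟨ht'fr, ht'N⟩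
    -- translate U
    have hFinv : j⁻¹ • F = F := by
      rw [hF, Set.smul_set_compl, smul_orbitUnion]
    have hUj : j⁻¹ • U = connectedComponentIn F (j⁻¹ • x₀) := by
      rw [hU, smul_connectedComponentIn j⁻¹ hx₀F, hFinv]
    have ht'U : j⁻¹ • w ∈ j⁻¹ • U := Set.smul_mem_smul_set hwU
    have ht'U2 : j⁻¹ • w ∈ connectedComponentIn F (j⁻¹ • x₀) := hUj ▸ ht'U
    have hcompU : connectedComponentIn F (j⁻¹ • w) = j⁻¹ • U :=
      (connectedComponentIn_eq ht'U2).symm.trans hUj.symm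
    -- locate the component among the chosen ones
    obtain ⟨i₀, hi₀s, hmem⟩ := Set.mem_iUnion₂.mp (hs ht'T)
    refine ⟨j, s.equivFin ⟨i₀, hi₀s⟩, ?_⟩
    have hVi : connectedComponentIn F ((s.equivFin.symm (s.equivFin ⟨i₀, hi₀s⟩) : T) : Y)
        = j⁻¹ • U := by
      rw [Equiv.symm_apply_apply]
      exact (connectedComponentIn_eq hmem).trans hcompU
    calc U = j • (j⁻¹ • U) := (smul_inv_smul j U).symm
      _ = _ := by rw [← hVi]
end

section
/- Let C₀ and C be compact subsets of Y and let U be a connected component of Y ∖ J·C. Assume that J is co-semistable at infinity in U with respect to C₀, meaning: for every J-bounded proper ray r with image in U, every loop α : [0,1] → U with α(0) = α(1) = r(0), and every compact D ⊆ Y, there exist n ≥ 0 and a continuous map H : [0,1] × [0,n] → Y with image in Y ∖ C₀ such that H(t,0) = α(t) for all t, H(0,s) = H(1,s) = r(s) for all s ∈ [0,n], and H(t,n) ∈ Y ∖ D for all t. Then for every compact F ⊆ Y and all J-bounded proper rays s₁, s₂ with images in U, with s₁(0) = s₂(0), which converge to the same end of U, there exist n ≥ 0 and a path β : [0,1] →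 Y ∖ F from s₁(n) to s₂(n) such that the concatenated loop s₁|[0,n] · β · (s₂|[0,n])⁻¹ is null-homotopic in Y ∖ C₀. -/
/-!
Push both rays beyond `F` and join `s₁ a` to `s₂ b` by a path `γ` in `U` outside `F`, using that
they converge to the same end. Co-semistability, applied to the ray `s₁ (a + ·)` and the loop
`γ · (s₂|[0,b])⁻¹ · s₁|[0,a]`, gives a map `S` of a rectangle `[0,1] × [0,m]` into `Y ∖ C₀` whose
vertical sides both run along `s₁` from `a` to `n = a + m` and whose top edge avoids `F`.
The path `β` goes along the top edge, down a side, along `γ` and then along `s₂` from `b` to `n`.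
The loop `s₁|[0,n] · β · (s₂|[0,n])⁻¹` factors through the rectangle with a whisker (carrying
`s₂` on `[b, n]`) attached at the end of `γ`; this planar set is star-shaped, so the radial
contraction gives the null-homotopy. The whisker avoids `C₀` because co-semistability, applied to
a constant loop, keeps every such ray out of `C₀`.
-/

open Pointwise

/-- The loop `r|[0,a] · β · (s|[0,b])⁻¹` (parametrized on `[0,1]`): traverse `r` from
`r 0` to `r a`, then the path `β` (parametrized on `[0,1]`), then `s` backwards from
`s b` to `s 0`.  Here the rays `r, s` have domain `[0,∞)`, modelled by `ℝ≥0`. -/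
noncomputable def concatLoop {Y : Type*} (r s : NNReal → Y) (a b : NNReal)
    (β : ℝ → Y) : ℝ → Y := fun t =>
  if t ≤ 1 / 3 then r (a * Real.toNNReal (3 * t))
  else if t ≤ 2 / 3 then β (3 * t - 1)
  else s (b * Real.toNNReal (3 - 3 * t))

/-- A loop `γ` (parametrized on `[0,1]`) is null-homotopic in `S ⊆ Y` if it extends to a
continuous map of the disk with image in `S`, i.e. there is a continuous map of the square
into `S` which restricts to `γ` on the bottom edge, is constant on the top edge, and agrees
on the two vertical edges. -/
def NullHomotopicIn {Y : Type*} [TopologicalSpace Y] (γ : ℝ → Y) (S : Set Y) : Prop :=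
  ∃ H : ℝ × ℝ → Y,
    ContinuousOn H (Set.Icc 0 1 ×ˢ Set.Icc 0 1) ∧
    H '' (Set.Icc 0 1 ×ˢ Set.Icc 0 1) ⊆ S ∧
    (∀ t ∈ Set.Icc (0 : ℝ) 1, H (t, 0) = γ t) ∧
    (∀ t ∈ Set.Icc (0 : ℝ) 1, H (t, 1) = H (0, 1)) ∧
    (∀ u ∈ Set.Icc (0 : ℝ) 1, H (0, u) = H (1, u))

open Set

section Concat

variable {X Z : Type*}

noncomputable def concat3 (p q r : ℝ → X) : ℝ → X := fun t =>
  if t ≤ 1 / 3 then p (3 * t) else if t ≤ 2 / 3 then q (3 * t - 1) else r (3 * t - 2)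

variable {p q r p' q' r' : ℝ → X} {t : ℝ}

theorem concat3_of_le_one_third (h : t ≤ 1 / 3) : concat3 p q r t = p (3 * t) := if_pos h

theorem concat3_of_mem_middle (hpq : p 1 = q 0) (h₁ : 1 / 3 ≤ t) (h₂ : t ≤ 2 / 3) :
    concat3 p q r t = q (3 * t - 1) := by
  rcases h₁.eq_or_lt with rfl | h₁
  · norm_num [concat3, hpq]
  · exact (if_neg h₁.not_ge).trans (if_pos h₂)

theorem concat3_of_two_thirds_le (hqr : q 1 = r 0) (h : 2 / 3 ≤ t) :
    concat3 p q r t = r (3 * t - 2) := by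
  have h' : ¬ t ≤ 1 / 3 := by linarith
  rcases h.eq_or_lt with rfl | h
  · norm_num [concat3, hqr]
  · exact (if_neg h').trans (if_neg h.not_ge)

@[simp] theorem concat3_zero : concat3 p q r 0 = p 0 := by norm_num [concat3]

@[simp] theorem concat3_one : concat3 p q r 1 = r 1 := by norm_num [concat3]

theorem comp_concat3 (f : X → Z) : f ∘ concat3 p q r = concat3 (f ∘ p) (f ∘ q) (f ∘ r) := by
  funext t
  simp only [Function.comp, concat3]
  split_ifs <;> rfl

theorem eqOn_concat3 (hp : EqOn p p' (Icc 0 1)) (hq : EqOn q q' (Icc 0 1))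
    (hr : EqOn r r' (Icc 0 1)) : EqOn (concat3 p q r) (concat3 p' q' r') (Icc 0 1) := by
  rintro t ⟨h₀, h₁⟩
  simp only [concat3]
  split_ifs with h h'
  · exact hp ⟨by linarith, by linarith⟩
  · exact hq ⟨by linarith, by linarith⟩
  · exact hr ⟨by linarith, by linarith⟩

theorem mapsTo_concat3 {s : Set X} (hp : MapsTo p (Icc 0 1) s) (hq : MapsTo q (Icc 0 1) s)
    (hr : MapsTo r (Icc 0 1) s) : MapsTo (concat3 p q r) (Icc 0 1) s := by
  rintro t ⟨h₀, h₁⟩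
  simp only [concat3]
  split_ifs with h h'
  · exact hp ⟨by linarith, by linarith⟩
  · exact hq ⟨by linarith, by linarith⟩
  · exact hr ⟨by linarith, by linarith⟩

variable [TopologicalSpace X]

theorem ContinuousOn.if_le_of_Icc {f g : ℝ → X} {a b c : ℝ} (hf : ContinuousOn f (Icc a c))
    (hg : ContinuousOn g (Icc c b)) (hfg : f c = g c) :
    ContinuousOn (fun t => if t ≤ c then f t else g t) (Icc a b) := by
  refine ((hf.congr fun t ht => if_pos ht.2).union_of_isClosed (hg.congr fun t ht => ?_)
    isClosed_Icc isClosed_Icc).mono fun t ht => ?_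
  · rcases ht.1.eq_or_lt with rfl | h
    · simp [hfg]
    · exact if_neg h.not_ge
  · rcases le_total t c with h | h
    exacts [Or.inl ⟨ht.1, h⟩, Or.inr ⟨h, ht.2⟩]

theorem ContinuousOn.concat3 (hp : ContinuousOn p (Icc 0 1)) (hq : ContinuousOn q (Icc 0 1))
    (hr : ContinuousOn r (Icc 0 1)) (hpq : p 1 = q 0) (hqr : q 1 = r 0) :
    ContinuousOn (concat3 p q r) (Icc 0 1) := by
  have affine : ∀ {f : ℝ → X} {k lo hi : ℝ}, ContinuousOn f (Icc 0 1) → 0 ≤ 3 * lo - k →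
      3 * hi - k ≤ 1 → ContinuousOn (fun t => f (3 * t - k)) (Icc lo hi) := fun hf hlo hhi =>
    hf.comp (by fun_prop : Continuous fun t : ℝ => 3 * t - _).continuousOn
      fun t ht => ⟨by linarith [ht.1], by linarith [ht.2]⟩
  have hp' : ContinuousOn (fun t => p (3 * t)) (Icc 0 (1 / 3)) := by
    simpa using affine (k := 0) (lo := 0) (hi := 1 / 3) hp (by norm_num) (by norm_num)
  exact hp'.if_le_of_Icc ((affine hq (by norm_num) (by norm_num)).if_le_of_Icc
    (affine hr (by norm_num) (by norm_num)) (by norm_num [hqr])) (by norm_num [hpq])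

end Concat

section Rays

variable {Y : Type*}

def raySegment (s : NNReal → Y) (a : NNReal) (u : ℝ) : Y := s (a * u.toNNReal)

@[simp] theorem raySegment_zero (s : NNReal → Y) (a : NNReal) : raySegment s a 0 = s 0 := by
  simp [raySegment]

@[simp] theorem raySegment_one (s : NNReal → Y) (a : NNReal) : raySegment s a 1 = s a := by
  simp [raySegment]

theorem mapsTo_raySegment {s : NNReal → Y} {a : NNReal} {A : Set Y} (h : ∀ x ≤ a, s x ∈ A) :
    MapsTo (raySegment s a) (Icc 0 1) A := fun _ hu =>
  h _ (mul_le_of_le_one_right zero_le (Real.toNNReal_le_one.2 hu.2))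

theorem eqOn_raySegment {s s' : NNReal → Y} {a : NNReal} (h : ∀ x ≤ a, s x = s' x) :
    EqOn (raySegment s a) (raySegment s' a) (Icc 0 1) := fun _ hu =>
  h _ (mul_le_of_le_one_right zero_le (Real.toNNReal_le_one.2 hu.2))

theorem Continuous.raySegment [TopologicalSpace Y] {s : NNReal → Y} (hs : Continuous s)
    (a : NNReal) : Continuous (raySegment s a) :=
  hs.comp (continuous_const.mul continuous_real_toNNReal)

theorem concatLoop_eq_concat3 (r s : NNReal → Y) (a b : NNReal) (β : ℝ → Y) :
    concatLoop r s a b β = concat3 (raySegment r a) β (fun u => raySegment s b (1 - u)) := by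
  funext t
  simp only [concatLoop, concat3, raySegment]
  rw [show 1 - (3 * t - 2) = 3 - 3 * t by ring]

theorem NNReal.isProperMap_add_left (a : NNReal) : IsProperMap (a + ·) := by
  refine isProperMap_iff_isCompact_preimage.2 ⟨continuous_const.add continuous_id, fun K hK => ?_⟩
  obtain ⟨c, hc⟩ := hK.bddAbove
  exact isCompact_Icc.of_isClosed_subset (hK.isClosed.preimage (continuous_const.add continuous_id))
    fun x hx => ⟨zero_le, le_add_self.trans (hc hx)⟩

theorem IsProperMap.exists_forall_gt_notMem [TopologicalSpace Y] {s : NNReal → Y}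
    (hs : IsProperMap s) {F : Set Y} (hF : IsCompact F) : ∃ N, ∀ x, N < x → s x ∉ F := by
  obtain ⟨N, hN⟩ := (hs.isCompact_preimage hF).bddAbove
  exact ⟨N, fun x hx h => hx.not_ge (hN h)⟩

end Rays

theorem nullHomotopicIn_of_eqOn_comp {Y E : Type*} [TopologicalSpace Y] [AddCommGroup E]
    [Module ℝ E] [TopologicalSpace E] [ContinuousAdd E] [ContinuousSMul ℝ E] {γ : ℝ → Y}
    {S : Set Y} {M : Set E} {c : E} {Φ : E → Y} {L : ℝ → E} (hM : StarConvex ℝ c M)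
    (hΦ : ContinuousOn Φ M) (hΦS : MapsTo Φ M S) (hL : ContinuousOn L (Icc 0 1))
    (hLM : MapsTo L (Icc 0 1) M) (hL01 : L 0 = L 1) (hγ : EqOn γ (Φ ∘ L) (Icc 0 1)) :
    NullHomotopicIn γ S := by
  have hmem : MapsTo (fun p : ℝ × ℝ => p.2 • c + (1 - p.2) • L p.1) (Icc 0 1 ×ˢ Icc 0 1) M :=
    fun p hp => hM (hLM hp.1) hp.2.1 (sub_nonneg.2 hp.2.2) (by ring)
  have hcont : ContinuousOn (fun p : ℝ × ℝ => p.2 • c + (1 - p.2) • L p.1)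
      (Icc 0 1 ×ˢ Icc 0 1) :=
    (continuousOn_snd.smul continuousOn_const).add ((continuousOn_const.sub continuousOn_snd).smul
      (hL.comp continuousOn_fst fun p hp => hp.1))
  refine ⟨fun p => Φ (p.2 • c + (1 - p.2) • L p.1), hΦ.comp hcont hmem,
    (hΦS.comp hmem).image_subset, fun t ht => ?_, fun t _ => ?_, fun u _ => ?_⟩
  · simpa using (hγ ht).symm
  · simp
  · simp [hL01]

/-! The rectangle `[0,1] × [0,m]` carries `S`, whose bottom edge is `γ` on `[0, 1/3]`, `s₂`
backwards from `b` on `[1/3, 2/3]` and `s₁` from `0` to `a` on `[2/3, 1]`; the whisker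
`{1/3} × [d, 0]` carries `s₂` beyond `b`. Then `extend S s₂ b` sends `pos 1 1 a x` to `s₁ x`
and `pos (1/3) (-1) b x` to `s₂ x`, and `bypass` is the model of `β`. -/
namespace SquareModel

variable {Y : Type*}

def domain (m d : ℝ) : Set (ℝ × ℝ) := Icc 0 1 ×ˢ Icc 0 m ∪ {1 / 3} ×ˢ Icc d 0

noncomputable def extend (S : ℝ × ℝ → Y) (s : NNReal → Y) (b : NNReal) (p : ℝ × ℝ) : Y :=
  if 0 ≤ p.2 then S p else s (b - p.2).toNNReal

noncomputable def pos (e v : ℝ) (a x : NNReal) : ℝ × ℝ :=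
  if x ≤ a then (2 / 3 + (e - 2 / 3) * (x / a), 0) else (e, v * (x - a))

noncomputable def bypass (m d : ℝ) : Path ((1 : ℝ), m) ((1 / 3 : ℝ), d) :=
  (Path.segment ((1 : ℝ), m) (0, m)).trans ((Path.segment ((0 : ℝ), m) (0, 0)).trans
    ((Path.segment ((0 : ℝ), (0 : ℝ)) (1 / 3, 0)).trans
      (Path.segment ((1 / 3 : ℝ), (0 : ℝ)) (1 / 3, d))))

variable {m d : ℝ} {a b x : NNReal}

theorem starConvex_domain (hm : 0 ≤ m) (hd : d ≤ 0) : StarConvex ℝ (1 / 3, 0) (domain m d) :=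
  (((convex_Icc 0 1).prod (convex_Icc 0 m)).starConvex
    ⟨⟨by norm_num, by norm_num⟩, le_rfl, hm⟩).union
  (((convex_singleton _).prod (convex_Icc d 0)).starConvex ⟨rfl, hd, le_rfl⟩)

theorem range_bypass_subset (hm : 0 ≤ m) (hd : d ≤ 0) :
    range (bypass m d) ⊆ Icc 0 1 ×ˢ {m} ∪ {0} ×ˢ Icc 0 m ∪ Icc 0 (1 / 3) ×ˢ {0} ∪
      {1 / 3} ×ˢ Icc d 0 := by
  simp only [bypass, Path.trans_range, Path.range_segment, ← union_assoc]
  refine union_subset_union (union_subset_union (union_subset_union ?_ ?_) ?_) ?_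
  · exact ((convex_Icc 0 1).prod (convex_singleton m)).segment_subset
      ⟨⟨zero_le_one, le_rfl⟩, rfl⟩ ⟨⟨le_rfl, zero_le_one⟩, rfl⟩
  · exact ((convex_singleton 0).prod (convex_Icc 0 m)).segment_subset
      ⟨rfl, hm, le_rfl⟩ ⟨rfl, le_rfl, hm⟩
  · exact ((convex_Icc 0 (1 / 3)).prod (convex_singleton 0)).segment_subset
      ⟨⟨le_rfl, by norm_num⟩, rfl⟩ ⟨⟨by norm_num, le_rfl⟩, rfl⟩
  · exact ((convex_singleton _).prod (convex_Icc d 0)).segment_subset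
      ⟨rfl, hd, le_rfl⟩ ⟨rfl, le_rfl, hd⟩

theorem range_bypass_subset_domain (hm : 0 ≤ m) (hd : d ≤ 0) :
    range (bypass m d) ⊆ domain m d := by
  refine (range_bypass_subset hm hd).trans (union_subset (union_subset (union_subset ?_ ?_) ?_)
    subset_union_right) <;> rintro ⟨x, y⟩ ⟨hx, hy⟩ <;> simp_all <;> left <;> constructor <;>
    constructor <;> linarith

theorem mapsTo_extend {S : ℝ × ℝ → Y} {s : NNReal → Y} {C : Set Y} (hm : 0 ≤ m)
    (hSC : MapsTo S (Icc 0 1 ×ˢ Icc 0 m) C) (hsC : range s ⊆ C) :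
    MapsTo (extend S s b) (domain m d) C := by
  rintro ⟨x, y⟩ (hp | ⟨rfl : x = 1 / 3, -, hy⟩) <;> unfold extend <;> split_ifs with hy'
  · exact hSC hp
  · exact absurd hp.2.1 hy'
  · exact hSC ⟨⟨by norm_num, by norm_num⟩, hy', hy.trans hm⟩
  · exact hsC (mem_range_self _)

theorem extend_of_nonneg {S : ℝ × ℝ → Y} {s : NNReal → Y} {x y : ℝ} (hy : 0 ≤ y) :
    extend S s b (x, y) = S (x, y) := if_pos hy

theorem extend_of_neg {S : ℝ × ℝ → Y} {s : NNReal → Y} {x y : ℝ} (hy : y < 0) :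
    extend S s b (x, y) = s (b - y).toNNReal := if_neg hy.not_ge

theorem pos_of_le {e v : ℝ} (h : x ≤ a) :
    pos e v a x = (2 / 3 + (e - 2 / 3) * (x / a), 0) := if_pos h

theorem pos_of_ge {e v : ℝ} (ha : a ≠ 0) (h : a ≤ x) : pos e v a x = (e, v * (x - a)) := by
  have : (a : ℝ) ≠ 0 := by exact_mod_cast ha
  rcases h.eq_or_lt with rfl | h
  · rw [pos_of_le le_rfl, div_self this, sub_self]
    ext <;> simp
  · exact if_neg h.not_ge

theorem continuous_pos {e v : ℝ} (ha : a ≠ 0) : Continuous (pos e v a) :=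
  Continuous.if_le (by fun_prop) (by fun_prop) continuous_id continuous_const fun x hx =>
    (pos_of_le hx.le).symm.trans (pos_of_ge ha hx.ge)

theorem pos_one_one_add (ha : a ≠ 0) (m : NNReal) : pos 1 1 a (a + m) = (1, (m : ℝ)) := by
  rw [pos_of_ge ha le_self_add]
  simp

theorem pos_third_neg_one_of_ge (hb : b ≠ 0) (h : b ≤ x) :
    pos (1 / 3) (-1) b x = (1 / 3, (b : ℝ) - x) := by
  rw [pos_of_ge hb h]
  ext <;> simp

theorem div_mem_Icc (ha : 0 < a) (h : x ≤ a) : (x : ℝ) / a ∈ Icc 0 1 :=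
  ⟨by positivity, div_le_one_of_le₀ h (by positivity)⟩

theorem pos_one_one_mem_domain (ha : 0 < a) (hm : 0 ≤ m) (hx : (x : ℝ) ≤ a + m) :
    pos 1 1 a x ∈ domain m d := by
  rcases le_total x a with h | h
  · obtain ⟨h₀, h₁⟩ := div_mem_Icc ha h
    rw [pos_of_le h]
    exact Or.inl ⟨⟨by linarith, by linarith⟩, le_rfl, hm⟩
  · have h' : (a : ℝ) ≤ x := h
    rw [pos_of_ge ha.ne' h]
    exact Or.inl ⟨⟨zero_le_one, le_rfl⟩, by linarith, by linarith⟩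

theorem pos_third_neg_one_mem_domain {n : ℝ} (hb : 0 < b) (hm : 0 ≤ m) (hx : (x : ℝ) ≤ n) :
    pos (1 / 3) (-1) b x ∈ domain m (b - n) := by
  rcases le_total x b with h | h
  · obtain ⟨h₀, h₁⟩ := div_mem_Icc hb h
    rw [pos_of_le h]
    exact Or.inl ⟨⟨by linarith, by linarith⟩, le_rfl, hm⟩
  · have h' : (b : ℝ) ≤ x := h
    rw [pos_of_ge hb.ne' h]
    exact Or.inr ⟨rfl, by linarith, by linarith⟩

theorem extend_pos_one_one {S : ℝ × ℝ → Y} {s s₁ : NNReal → Y} {p q : ℝ → Y}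
    (hbot : ∀ t ∈ Icc (0 : ℝ) 1, S (t, 0) = concat3 p q (raySegment s₁ a) t) (hq : q 1 = s₁ 0)
    (hside : ∀ y ∈ Icc (0 : ℝ) m, S (1, y) = s₁ (a + y.toNNReal)) (ha : 0 < a)
    (hx : (x : ℝ) ≤ a + m) : extend S s b (pos 1 1 a x) = s₁ x := by
  rcases le_total x a with h | h
  · obtain ⟨h₀, h₁⟩ := div_mem_Icc ha h
    rw [pos_of_le h, extend_of_nonneg le_rfl, hbot _ ⟨by linarith, by linarith⟩,
      concat3_of_two_thirds_le (by simpa using hq) (by linarith), raySegment,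
      show 3 * (2 / 3 + (1 - 2 / 3) * (x / a)) - 2 = ((x / a : NNReal) : ℝ) by push_cast; ring,
      Real.toNNReal_coe, mul_div_cancel₀ _ ha.ne']
  · have h' : (a : ℝ) ≤ x := h
    rw [pos_of_ge ha.ne' h, one_mul, extend_of_nonneg (sub_nonneg.2 h'),
      hside _ ⟨sub_nonneg.2 h', by linarith⟩, ← NNReal.sub_def, add_tsub_cancel_of_le h]

theorem extend_pos_third_neg_one {S : ℝ × ℝ → Y} {s₂ : NNReal → Y} {p r : ℝ → Y}
    (hbot : ∀ t ∈ Icc (0 : ℝ) 1, S (t, 0) = concat3 p (fun u => raySegment s₂ b (1 - u)) r t)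
    (hp : p 1 = s₂ b) (hb : 0 < b) : extend S s₂ b (pos (1 / 3) (-1) b x) = s₂ x := by
  rcases le_or_gt x b with h | h
  · obtain ⟨h₀, h₁⟩ := div_mem_Icc hb h
    rw [pos_of_le h, extend_of_nonneg le_rfl, hbot _ ⟨by linarith, by linarith⟩,
      concat3_of_mem_middle (by simpa using hp) (by linarith) (by linarith), raySegment,
      show 1 - (3 * (2 / 3 + (1 / 3 - 2 / 3) * (x / b)) - 1) = ((x / b : NNReal) : ℝ) by
        push_cast; ring, Real.toNNReal_coe, mul_div_cancel₀ _ hb.ne']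
  · rw [pos_third_neg_one_of_ge hb.ne' h.le, extend_of_neg (sub_neg.2 (by exact_mod_cast h)),
      sub_sub_cancel, Real.toNNReal_coe]

theorem mapsTo_extend_edges {S : ℝ × ℝ → Y} {s₁ s₂ : NNReal → Y} {γ : ℝ → Y}
    (hbot : ∀ t ∈ Icc (0 : ℝ) 1,
      S (t, 0) = concat3 γ (fun u => raySegment s₂ b (1 - u)) (raySegment s₁ a) t)
    (hside : ∀ y ∈ Icc (0 : ℝ) m, S (0, y) = s₁ (a + y.toNNReal)) (hm : 0 ≤ m) :
    MapsTo (extend S s₂ b) (Icc 0 1 ×ˢ {m} ∪ {0} ×ˢ Icc 0 m ∪ Icc 0 (1 / 3) ×ˢ {0} ∪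
        {1 / 3} ×ˢ Icc d 0)
      (S '' (Icc 0 1 ×ˢ {m}) ∪ s₁ '' Ici a ∪ γ '' Icc 0 1 ∪ s₂ '' Ici b) := by
  rintro ⟨x, y⟩ (((⟨hx, rfl : y = m⟩ | ⟨rfl : x = 0, hy⟩) | ⟨hx, rfl : y = 0⟩) |
    ⟨rfl : x = 1 / 3, -, hy⟩)
  · rw [extend_of_nonneg hm]
    exact Or.inl (Or.inl (Or.inl (mem_image_of_mem S ⟨hx, rfl⟩)))
  · rw [extend_of_nonneg hy.1, hside y hy]
    exact Or.inl (Or.inl (Or.inr (mem_image_of_mem s₁ (le_self_add : a ≤ _))))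
  · rw [extend_of_nonneg le_rfl, hbot x ⟨hx.1, hx.2.trans (by norm_num)⟩,
      concat3_of_le_one_third hx.2]
    exact Or.inl (Or.inr (mem_image_of_mem γ ⟨by linarith [hx.1], by linarith [hx.2]⟩))
  · rcases hy.eq_or_lt with rfl | hy
    · rw [extend_of_nonneg le_rfl, hbot _ ⟨by norm_num, by norm_num⟩,
        concat3_of_le_one_third le_rfl]
      exact Or.inl (Or.inr (mem_image_of_mem γ ⟨by norm_num, by norm_num⟩))
    · rw [extend_of_neg hy]
      exact Or.inr (mem_image_of_mem s₂
        ((Real.le_toNNReal_iff_coe_le (by linarith)).2 (by linarith)))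

variable [TopologicalSpace Y] {S : ℝ × ℝ → Y} {s : NNReal → Y}

theorem continuousOn_extend (hS : ContinuousOn S (Icc 0 1 ×ˢ Icc 0 m)) (hs : Continuous s)
    (hjoin : S (1 / 3, 0) = s b) : ContinuousOn (extend S s b) (domain m d) := by
  refine (hS.congr fun p hp => if_pos hp.2.1).union_of_isClosed
    ((hs.comp (by fun_prop : Continuous fun p : ℝ × ℝ => ((b : ℝ) - p.2).toNNReal)).continuousOn
      |>.congr ?_) (isClosed_Icc.prod isClosed_Icc) (isClosed_singleton.prod isClosed_Icc)
  rintro ⟨x, y⟩ ⟨rfl : x = 1 / 3, -, hy⟩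
  rcases hy.eq_or_lt with rfl | hy
  · show (if (0 : ℝ) ≤ 0 then S (1 / 3, 0) else _) = s ((b : ℝ) - 0).toNNReal
    rw [if_pos le_rfl, hjoin, sub_zero, Real.toNNReal_coe]
  · exact if_neg hy.not_ge

end SquareModel

open SquareModel in
theorem exists_path_nullHomotopicIn_of_square {Y : Type*} [TopologicalSpace Y] {C : Set Y}
    {S : ℝ × ℝ → Y} {s₁ s₂ : NNReal → Y} {γ : ℝ → Y} {a b m : NNReal}
    (hS : ContinuousOn S (Icc 0 1 ×ˢ Icc 0 (m : ℝ))) (hSC : MapsTo S (Icc 0 1 ×ˢ Icc 0 (m : ℝ)) C)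
    (hs₂ : Continuous s₂) (hs₂C : range s₂ ⊆ C)
    (hbot : ∀ t ∈ Icc (0 : ℝ) 1,
      S (t, 0) = concat3 γ (fun u => raySegment s₂ b (1 - u)) (raySegment s₁ a) t)
    (hside : ∀ y ∈ Icc (0 : ℝ) m, S (0, y) = s₁ (a + y.toNNReal) ∧ S (1, y) = s₁ (a + y.toNNReal))
    (hγ1 : γ 1 = s₂ b) (h12 : s₁ 0 = s₂ 0) (ha : 0 < a) (hb : 0 < b) (hbm : b ≤ a + m) :
    ∃ β : ℝ → Y, ContinuousOn β (Icc 0 1) ∧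
      MapsTo β (Icc 0 1) (S '' (Icc 0 1 ×ˢ {(m : ℝ)}) ∪ s₁ '' Ici a ∪ γ '' Icc 0 1 ∪ s₂ '' Ici b) ∧
      β 0 = s₁ (a + m) ∧ β 1 = s₂ (a + m) ∧
      NullHomotopicIn (concatLoop s₁ s₂ (a + m) (a + m) β) C := by
  set n := a + m
  set d : ℝ := b - n
  set Φ := extend S s₂ b
  set ℓ := bypass m d
  have hm : (0 : ℝ) ≤ m := m.coe_nonneg
  have hd : d ≤ 0 := sub_nonpos.2 (by exact_mod_cast hbm)
  have hℓ : ∀ t, ℓ.extend t ∈ range ℓ := fun t => ℓ.extend_range ▸ mem_range_self t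
  have hjoin : S (1 / 3, 0) = s₂ b := by
    rw [hbot _ ⟨by norm_num, by norm_num⟩, concat3_of_le_one_third le_rfl]
    norm_num [hγ1]
  have hΦ : ContinuousOn Φ (domain m d) := continuousOn_extend hS hs₂ hjoin
  have hΦ₁ : ∀ x ≤ n, Φ (pos 1 1 a x) = s₁ x := fun x hx =>
    extend_pos_one_one hbot (by simp [h12]) (fun y hy => (hside y hy).2) ha (by exact_mod_cast hx)
  have hΦ₂ : ∀ x, Φ (pos (1 / 3) (-1) b x) = s₂ x := fun x =>
    extend_pos_third_neg_one hbot (by simpa using hγ1) hb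
  have hn₁ : pos 1 1 a n = (1, (m : ℝ)) := pos_one_one_add ha.ne' m
  have hn₂ : pos (1 / 3) (-1) b n = (1 / 3, d) := pos_third_neg_one_of_ge hb.ne' hbm
  have hrev : MapsTo (fun u : ℝ => 1 - u) (Icc 0 1) (Icc 0 1) := fun u hu =>
    ⟨sub_nonneg.2 hu.2, by linarith [hu.1]⟩
  refine ⟨Φ ∘ ℓ.extend, hΦ.comp ℓ.continuous_extend.continuousOn
      fun t _ => range_bypass_subset_domain hm hd (hℓ t),
    fun t _ => mapsTo_extend_edges hbot (fun y hy => (hside y hy).1) hm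
      (range_bypass_subset hm hd (hℓ t)), ?_, ?_, ?_⟩
  · simp only [Function.comp, Path.extend_zero, ← hn₁, hΦ₁ n le_rfl]
  · simp only [Function.comp, Path.extend_one, ← hn₂, hΦ₂]
  refine nullHomotopicIn_of_eqOn_comp (starConvex_domain hm hd) hΦ
    (mapsTo_extend hm hSC hs₂C) (L := concat3 (raySegment (pos 1 1 a) n) ℓ.extend
      (fun u => raySegment (pos (1 / 3) (-1) b) n (1 - u))) ?_ ?_ ?_ ?_
  · exact ((continuous_pos ha.ne').raySegment n).continuousOn.concat3
      ℓ.continuous_extend.continuousOn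
      ((continuous_pos hb.ne').raySegment n |>.comp
        (continuous_const.sub continuous_id : Continuous fun u : ℝ => 1 - u)).continuousOn
      (by rw [raySegment_one, hn₁, Path.extend_zero])
      (by rw [Path.extend_one, sub_zero, raySegment_one, hn₂])
  · exact mapsTo_concat3
      (mapsTo_raySegment fun x hx => pos_one_one_mem_domain ha hm (by exact_mod_cast hx))
      (fun t _ => range_bypass_subset_domain hm hd (hℓ t))
      ((mapsTo_raySegment fun x hx =>
        pos_third_neg_one_mem_domain hb hm (by exact_mod_cast hx)).comp hrev)
  · simp [pos_of_le]
  · rw [concatLoop_eq_concat3, comp_concat3]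
    exact eqOn_concat3 (eqOn_raySegment fun x hx => (hΦ₁ x hx).symm) (eqOn_refl _ _)
      ((eqOn_raySegment fun x _ => (hΦ₂ x).symm).comp_right hrev)

def CoSemistableAtInfinity (J : Type*) {Y : Type*} [TopologicalSpace Y] [SMul J Y]
    (U C₀ : Set Y) : Prop :=
  ∀ r : NNReal → Y, IsProperMap r → JBounded J (Set.range r) →
      Set.range r ⊆ U →
      ∀ α : ℝ → Y, ContinuousOn α (Set.Icc 0 1) → α '' Set.Icc 0 1 ⊆ U →
        α 0 = r 0 → α 1 = r 0 →
      ∀ D : Set Y, IsCompact D →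
        ∃ (n : NNReal) (H : ℝ × ℝ → Y),
          ContinuousOn H (Set.Icc 0 1 ×ˢ Set.Icc 0 (n : ℝ)) ∧
          H '' (Set.Icc 0 1 ×ˢ Set.Icc 0 (n : ℝ)) ⊆ C₀ᶜ ∧
          (∀ t ∈ Set.Icc (0 : ℝ) 1, H (t, 0) = α t) ∧
          (∀ s ∈ Set.Icc (0 : ℝ) (n : ℝ),
            H (0, s) = r s.toNNReal ∧ H (1, s) = r s.toNNReal) ∧
          (∀ t ∈ Set.Icc (0 : ℝ) 1, H (t, (n : ℝ)) ∈ Dᶜ)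

namespace CoSemistableAtInfinity

variable {J Y : Type*} [TopologicalSpace Y] [SMul J Y] {U C₀ : Set Y}

theorem range_subset_compl (hco : CoSemistableAtInfinity J U C₀) {s : NNReal → Y}
    (hs : IsProperMap s) (hJ : JBounded J (range s)) (hU : range s ⊆ U) : range s ⊆ C₀ᶜ := by
  rintro _ ⟨x, rfl⟩
  obtain ⟨n, H, -, hHC, -, hside, htop⟩ := hco s hs hJ hU (fun _ => s 0) continuousOn_const
    (by rintro _ ⟨_, -, rfl⟩; exact hU (mem_range_self 0)) rfl rfl (s '' Icc 0 x)
    (isCompact_Icc.image hs.continuous)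
  have hxn : (x : ℝ) ≤ n := by
    by_contra! h
    refine htop 0 ⟨le_rfl, zero_le_one⟩ ?_
    rw [(hside n ⟨n.coe_nonneg, le_rfl⟩).1, Real.toNNReal_coe]
    exact mem_image_of_mem s ⟨zero_le, h.le⟩
  have := hHC (mem_image_of_mem H (⟨⟨le_rfl, zero_le_one⟩, x.coe_nonneg, hxn⟩ :
    ((0 : ℝ), (x : ℝ)) ∈ Icc 0 1 ×ˢ Icc 0 (n : ℝ)))
  rwa [(hside x ⟨x.coe_nonneg, hxn⟩).1, Real.toNNReal_coe] at this

theorem exists_square (hco : CoSemistableAtInfinity J U C₀) {s₁ s₂ : NNReal → Y} {γ : ℝ → Y}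
    {a b : NNReal} (hs₁ : IsProperMap s₁) (hs₂ : Continuous s₂) (hJ₁ : JBounded J (range s₁))
    (hU₁ : range s₁ ⊆ U) (hU₂ : range s₂ ⊆ U) (hγ : ContinuousOn γ (Icc 0 1))
    (hγU : MapsTo γ (Icc 0 1) U) (hγ0 : γ 0 = s₁ a) (hγ1 : γ 1 = s₂ b) (h12 : s₁ 0 = s₂ 0)
    {D : Set Y} (hD : IsCompact D) :
    ∃ (m : NNReal) (S : ℝ × ℝ → Y), ContinuousOn S (Icc 0 1 ×ˢ Icc 0 (m : ℝ)) ∧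
      MapsTo S (Icc 0 1 ×ˢ Icc 0 (m : ℝ)) C₀ᶜ ∧
      (∀ t ∈ Icc (0 : ℝ) 1,
        S (t, 0) = concat3 γ (fun u => raySegment s₂ b (1 - u)) (raySegment s₁ a) t) ∧
      (∀ y ∈ Icc (0 : ℝ) m, S (0, y) = s₁ (a + y.toNNReal) ∧ S (1, y) = s₁ (a + y.toNNReal)) ∧
      ∀ t ∈ Icc (0 : ℝ) 1, S (t, m) ∉ D := by
  obtain ⟨D₁, hD₁, hJ⟩ := hJ₁
  have hr : range (fun x => s₁ (a + x)) ⊆ range s₁ := range_comp_subset_range (a + ·) s₁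
  obtain ⟨m, S, hS, hSC, hbot, hside, htop⟩ := hco (fun x => s₁ (a + x))
    (hs₁.comp (NNReal.isProperMap_add_left a)) ⟨D₁, hD₁, hr.trans hJ⟩ (hr.trans hU₁) _
    (hγ.concat3 ((hs₂.raySegment b).comp
      (continuous_const.sub continuous_id : Continuous fun u : ℝ => 1 - u)).continuousOn
      (hs₁.continuous.raySegment a).continuousOn (by simp [hγ1]) (by simp [h12]))
    (mapsTo_concat3 hγU (fun _ _ => hU₂ (mem_range_self _))
      (fun _ _ => hU₁ (mem_range_self _))).image_subset (by simp [hγ0]) (by simp) D hD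
  exact ⟨m, S, hS, mapsTo_iff_image_subset.2 hSC, hbot, hside, htop⟩

end CoSemistableAtInfinity

theorem exists_path_beyond {Y : Type*} [TopologicalSpace Y] {U F : Set Y} {s₁ s₂ : NNReal → Y}
    (hs₁ : IsProperMap s₁) (hs₂ : IsProperMap s₂) (hF : IsCompact F)
    (hend : ∀ K : Set Y, IsCompact K → ∃ (a b : NNReal) (γ : ℝ → Y),
      ContinuousOn γ (Icc 0 1) ∧ γ '' Icc 0 1 ⊆ U \ K ∧ γ 0 = s₁ a ∧ γ 1 = s₂ b) :
    ∃ (a b : NNReal) (γ : ℝ → Y), ContinuousOn γ (Icc 0 1) ∧ MapsTo γ (Icc 0 1) U ∧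
      MapsTo γ (Icc 0 1) Fᶜ ∧ γ 0 = s₁ a ∧ γ 1 = s₂ b ∧ 0 < a ∧ 0 < b ∧
      (∀ x, a ≤ x → s₁ x ∉ F) ∧ ∀ x, b ≤ x → s₂ x ∉ F := by
  obtain ⟨N₁, hN₁⟩ := hs₁.exists_forall_gt_notMem hF
  obtain ⟨N₂, hN₂⟩ := hs₂.exists_forall_gt_notMem hF
  obtain ⟨a, b, γ, hγ, hγK, hγ0, hγ1⟩ := hend (F ∪ s₁ '' Icc 0 N₁ ∪ s₂ '' Icc 0 N₂)
    ((hF.union (isCompact_Icc.image hs₁.continuous)).union (isCompact_Icc.image hs₂.continuous))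
  replace hγK := mapsTo_iff_image_subset.2 hγK
  have ha : N₁ < a := not_le.1 fun h => (hγK ⟨le_rfl, zero_le_one⟩).2
    (Or.inl (Or.inr (hγ0 ▸ mem_image_of_mem s₁ ⟨zero_le, h⟩)))
  have hb : N₂ < b := not_le.1 fun h => (hγK ⟨zero_le_one, le_rfl⟩).2
    (Or.inr (hγ1 ▸ mem_image_of_mem s₂ ⟨zero_le, h⟩))
  exact ⟨a, b, γ, hγ, fun t ht => (hγK ht).1, fun t ht h => (hγK ht).2 (Or.inl (Or.inl h)), hγ0,
    hγ1, zero_le.trans_lt ha, zero_le.trans_lt hb, fun x hx => hN₁ x (ha.trans_le hx),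
    fun x hx => hN₂ x (hb.trans_le hx)⟩

theorem stmt13_general {Y : Type*} [TopologicalSpace Y]
    {J : Type*} [Group J] [MulAction J Y]
    (C₀ : Set Y)
    (U : Set Y)
    -- `J` is co-semistable at infinity in `U` with respect to `C₀`:
    (hco : ∀ r : NNReal → Y, IsProperMap r → JBounded J (Set.range r) →
      Set.range r ⊆ U →
      ∀ α : ℝ → Y, ContinuousOn α (Set.Icc 0 1) → α '' Set.Icc 0 1 ⊆ U →
        α 0 = r 0 → α 1 = r 0 →
      ∀ D : Set Y, IsCompact D →
        ∃ (n : NNReal) (H : ℝ × ℝ → Y),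
          ContinuousOn H (Set.Icc 0 1 ×ˢ Set.Icc 0 (n : ℝ)) ∧
          H '' (Set.Icc 0 1 ×ˢ Set.Icc 0 (n : ℝ)) ⊆ C₀ᶜ ∧
          (∀ t ∈ Set.Icc (0 : ℝ) 1, H (t, 0) = α t) ∧
          (∀ s ∈ Set.Icc (0 : ℝ) (n : ℝ),
            H (0, s) = r s.toNNReal ∧ H (1, s) = r s.toNNReal) ∧
          (∀ t ∈ Set.Icc (0 : ℝ) 1, H (t, (n : ℝ)) ∈ Dᶜ)) :
    ∀ F : Set Y, IsCompact F →
    ∀ s₁ s₂ : NNReal → Y, IsProperMap s₁ → IsProperMap s₂ →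
      JBounded J (Set.range s₁) → JBounded J (Set.range s₂) →
      Set.range s₁ ⊆ U → Set.range s₂ ⊆ U → s₁ 0 = s₂ 0 →
      -- `s₁` and `s₂` converge to the same end of `U`:
      (∀ K : Set Y, IsCompact K → ∃ (a b : NNReal) (γ : ℝ → Y),
        ContinuousOn γ (Set.Icc 0 1) ∧ γ '' Set.Icc 0 1 ⊆ U \ K ∧
        γ 0 = s₁ a ∧ γ 1 = s₂ b) →
      ∃ (n : NNReal) (β : ℝ → Y),
        ContinuousOn β (Set.Icc 0 1) ∧ β '' Set.Icc 0 1 ⊆ Fᶜ ∧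
        β 0 = s₁ n ∧ β 1 = s₂ n ∧
        NullHomotopicIn (concatLoop s₁ s₂ n n β) C₀ᶜ := by
  intro F hF s₁ s₂ hs₁ hs₂ hJ₁ hJ₂ hU₁ hU₂ h12 hend
  obtain ⟨a, b, γ, hγ, hγU, hγF, hγ0, hγ1, ha, hb, hs₁F, hs₂F⟩ :=
    exists_path_beyond hs₁ hs₂ hF hend
  obtain ⟨m, S, hS, hSC, hbot, hside, htop⟩ :=
    CoSemistableAtInfinity.exists_square hco hs₁ hs₂.continuous hJ₁ hU₁ hU₂ hγ hγU hγ0 hγ1 h12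
      (hF.union (isCompact_Icc.image hs₁.continuous) : IsCompact (F ∪ s₁ '' Icc 0 b))
  have hbm : b ≤ a + m := by
    by_contra! h
    refine htop 0 ⟨le_rfl, zero_le_one⟩ (Or.inr ?_)
    rw [(hside m ⟨m.coe_nonneg, le_rfl⟩).1, Real.toNNReal_coe]
    exact mem_image_of_mem s₁ ⟨zero_le, h.le⟩
  obtain ⟨β, hβ, hβT, hβ0, hβ1, hnull⟩ := exists_path_nullHomotopicIn_of_square hS hSC
    hs₂.continuous (CoSemistableAtInfinity.range_subset_compl hco hs₂ hJ₂ hU₂) hbot hside hγ1 h12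
    ha hb hbm
  refine ⟨a + m, β, hβ, (hβT.mono_right ?_).image_subset, hβ0, hβ1, hnull⟩
  rintro _ (((⟨⟨t, _⟩, ⟨ht, rfl⟩, rfl⟩ | ⟨x, hx, rfl⟩) | ⟨t, ht, rfl⟩) | ⟨x, hx, rfl⟩)
  · exact fun h => htop t ht (Or.inl h)
  · exact hs₁F x hx
  · exact hγF ht
  · exact hs₂F x hx

/-- Let `Y` be a connected, locally compact, locally connected, Hausdorff space, and let the
group `J` act on `Y` by homeomorphisms, properly discontinuously.  Let `C₀, C ⊆ Y` be compact
and let `U` be a connected component of `Y ∖ J·C` in which `J` is co-semistable at infinity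
with respect to `C₀` (hypothesis `hco`).  Then for every compact `F ⊆ Y` and all `J`-bounded
proper rays `s₁, s₂` in `U` with `s₁(0) = s₂(0)` converging to the same end of `U`, there
are `n ≥ 0` and a path `β` in `Y ∖ F` from `s₁(n)` to `s₂(n)` such that the loop
`s₁|[0,n] · β · (s₂|[0,n])⁻¹` is null-homotopic in `Y ∖ C₀`. -/
theorem stmt13 {Y : Type*} [TopologicalSpace Y] [ConnectedSpace Y]
    [LocallyCompactSpace Y] [LocallyConnectedSpace Y] [T2Space Y]
    {J : Type*} [Group J] [MulAction J Y]
    (hcont : ∀ j : J, Continuous fun y : Y => j • y)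
    (hpd : ∀ K : Set Y, IsCompact K → {j : J | ((j • K) ∩ K).Nonempty}.Finite)
    (C₀ C : Set Y) (hC₀ : IsCompact C₀) (hC : IsCompact C)
    (U : Set Y) (hU : IsComponentOf (orbitUnion J C)ᶜ U)
    -- `J` is co-semistable at infinity in `U` with respect to `C₀`:
    (hco : ∀ r : NNReal → Y, IsProperMap r → JBounded J (Set.range r) →
      Set.range r ⊆ U →
      ∀ α : ℝ → Y, ContinuousOn α (Set.Icc 0 1) → α '' Set.Icc 0 1 ⊆ U →
        α 0 = r 0 → α 1 = r 0 →
      ∀ D : Set Y, IsCompact D →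
        ∃ (n : NNReal) (H : ℝ × ℝ → Y),
          ContinuousOn H (Set.Icc 0 1 ×ˢ Set.Icc 0 (n : ℝ)) ∧
          H '' (Set.Icc 0 1 ×ˢ Set.Icc 0 (n : ℝ)) ⊆ C₀ᶜ ∧
          (∀ t ∈ Set.Icc (0 : ℝ) 1, H (t, 0) = α t) ∧
          (∀ s ∈ Set.Icc (0 : ℝ) (n : ℝ),
            H (0, s) = r s.toNNReal ∧ H (1, s) = r s.toNNReal) ∧
          (∀ t ∈ Set.Icc (0 : ℝ) 1, H (t, (n : ℝ)) ∈ Dᶜ)) :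
    ∀ F : Set Y, IsCompact F →
    ∀ s₁ s₂ : NNReal → Y, IsProperMap s₁ → IsProperMap s₂ →
      JBounded J (Set.range s₁) → JBounded J (Set.range s₂) →
      Set.range s₁ ⊆ U → Set.range s₂ ⊆ U → s₁ 0 = s₂ 0 →
      -- `s₁` and `s₂` converge to the same end of `U`:
      (∀ K : Set Y, IsCompact K → ∃ (a b : NNReal) (γ : ℝ → Y),
        ContinuousOn γ (Set.Icc 0 1) ∧ γ '' Set.Icc 0 1 ⊆ U \ K ∧
        γ 0 = s₁ a ∧ γ 1 = s₂ b) →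
      ∃ (n : NNReal) (β : ℝ → Y),
        ContinuousOn β (Set.Icc 0 1) ∧ β '' Set.Icc 0 1 ⊆ Fᶜ ∧
        β 0 = s₁ n ∧ β 1 = s₂ n ∧
        NullHomotopicIn (concatLoop s₁ s₂ n n β) C₀ᶜ :=
  stmt13_general C₀ U hco
end
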